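/- arXiv:1901.09739 — 5 statements merged into one kernel-verified Lean document; each statement's English description precedes it below -/
import Mathlib

section
/- Let Z be a standard real Gaussian, Y := log|Z|, a := E[Y], and W := Y - a. Then for every p ≥ 2 there exist universal constants c₁, c₂ > 0 (independent of p) such that c₁‖Θ‖_p ≤ ‖W‖_p ≤ c₂‖Θ‖_p, where Θ is a standard exponential random variable; explicitly one may take c₁ = 1/4 and c₂ = 6. -/
open MeasureTheory ProbabilityTheory Real Set Filter
open scoped NNReal ENNReal

noncomputable section CLAG

namespace CLAG

def phi (x : ℝ) : ℝ := (Real.sqrt (2 * π))⁻¹ * Real.exp (-x ^ 2 / 2)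

lemma phi_nonneg (x : ℝ) : 0 ≤ phi x :=
  mul_nonneg (inv_nonneg.mpr (Real.sqrt_nonneg _)) (Real.exp_pos _).le

lemma sqrt_two_pi_pos : 0 < Real.sqrt (2 * π) := Real.sqrt_pos.mpr (by positivity)

lemma two_le_sqrt_two_pi : (2:ℝ) ≤ Real.sqrt (2 * π) := by
  have : (2:ℝ) = Real.sqrt 4 := by
    rw [show (4:ℝ) = 2 ^ 2 by norm_num, Real.sqrt_sq (by norm_num)]
  rw [this]
  exact Real.sqrt_le_sqrt (by nlinarith [Real.pi_gt_three])

lemma sqrt_two_pi_le_three : Real.sqrt (2 * π) ≤ 3 := by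
  have : (3:ℝ) = Real.sqrt 9 := by
    rw [show (9:ℝ) = 3 ^ 2 by norm_num, Real.sqrt_sq (by norm_num)]
  rw [this]
  exact Real.sqrt_le_sqrt (by nlinarith [Real.pi_lt_d2])

lemma continuous_phi : Continuous phi := by
  unfold phi; fun_prop

lemma phi_le (x : ℝ) : phi x ≤ (Real.sqrt (2 * π))⁻¹ := by
  unfold phi
  nlinarith [Real.exp_le_one_iff.mpr (show -x^2/2 ≤ 0 by nlinarith [sq_nonneg x]),
    inv_nonneg.mpr (Real.sqrt_nonneg (2*π)), Real.exp_pos (-x^2/2)]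

lemma exp_two_le_eight : Real.exp 2 ≤ 8 := by
  have h := Real.exp_one_lt_d9
  have : Real.exp 2 = Real.exp 1 * Real.exp 1 := by
    rw [← Real.exp_add]; norm_num
  nlinarith [Real.exp_pos 1]

lemma gaussian_integral_eq (g : ℝ → ℝ) :
    ∫ x, g x ∂(gaussianReal 0 1) = ∫ x, phi x * g x := by
  have hphi : gaussianPDFReal 0 1 = phi := by
    funext x
    simp only [gaussianPDFReal, phi, NNReal.coe_one, mul_one, sub_zero]
  rw [gaussianReal_of_var_ne_zero 0 one_ne_zero]
  have hd : (gaussianPDF 0 1) = fun x => ((Real.toNNReal (gaussianPDFReal 0 1 x) : ℝ≥0) : ℝ≥0∞) := by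
    funext x
    rfl
  rw [hd, integral_withDensity_eq_integral_smul
    ((measurable_gaussianPDFReal 0 1).real_toNNReal) g]
  congr 1
  funext x
  rw [NNReal.smul_def, smul_eq_mul, Real.coe_toNNReal _ (gaussianPDFReal_nonneg 0 1 x), hphi]


lemma cov_deriv (a : ℝ) : ∀ x ∈ (univ : Set ℝ),
    HasDerivWithinAt (fun t => Real.exp (a + t)) (Real.exp (a + x)) univ x := by
  intro x _
  have h : HasDerivAt (fun t : ℝ => a + t) 1 x := (hasDerivAt_id x).const_add a
  have := h.exp
  rw [mul_one] at this
  exact this.hasDerivWithinAt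

lemma cov_inj (a : ℝ) : InjOn (fun t => Real.exp (a + t)) (univ : Set ℝ) := by
  intro x _ y _ h
  simpa using Real.exp_injective h

lemma cov_image (a : ℝ) : (fun t => Real.exp (a + t)) '' (univ : Set ℝ) = Ioi (0:ℝ) := by
  rw [image_univ]
  ext y
  simp only [mem_range, mem_Ioi]
  constructor
  · rintro ⟨t, rfl⟩; exact Real.exp_pos _
  · intro hy; exact ⟨Real.log y - a, by rw [add_sub_cancel, Real.exp_log hy]⟩

lemma cov_eq (a : ℝ) (g : ℝ → ℝ) :
    ∫ x in Ioi (0:ℝ), g x = ∫ t, Real.exp (a + t) * g (Real.exp (a + t)) := by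
  rw [← cov_image a,
    integral_image_eq_integral_abs_deriv_smul MeasurableSet.univ (cov_deriv a) (cov_inj a) g]
  rw [Measure.restrict_univ]
  congr 1
  funext x
  rw [abs_of_pos (Real.exp_pos _), smul_eq_mul]

lemma cov_int (a : ℝ) {g : ℝ → ℝ}
    (h : Integrable fun t => Real.exp (a + t) * g (Real.exp (a + t))) :
    IntegrableOn g (Ioi (0:ℝ)) := by
  rw [← cov_image a,
    integrableOn_image_iff_integrableOn_abs_deriv_smul MeasurableSet.univ (cov_deriv a)
      (cov_inj a) g]
  rw [IntegrableOn, Measure.restrict_univ]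
  apply h.congr
  filter_upwards with x
  rw [abs_of_pos (Real.exp_pos _), smul_eq_mul]

lemma integrable_comp_abs' {F : ℝ → ℝ} (hF : IntegrableOn F (Ioi (0:ℝ))) :
    Integrable fun x => F |x| := by
  have int_Ioi : IntegrableOn (fun x => F |x|) (Ioi 0) := by
    apply hF.congr_fun (fun x hx => ?_) measurableSet_Ioi
    rw [abs_of_pos hx]
  have int_Iic : IntegrableOn (fun x ↦ F |x|) (Iic 0) := by
    rw [← Measure.map_neg_eq_self (volume : Measure ℝ)]
    have m : MeasurableEmbedding fun x : ℝ => -x :=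
      (Homeomorph.neg ℝ).measurableEmbedding
    rw [m.integrableOn_map_iff]
    simp_rw [Function.comp_def, abs_neg, neg_preimage, neg_Iic, neg_zero]
    exact Iff.mpr integrableOn_Ici_iff_integrableOn_Ioi int_Ioi
  have : Integrable (fun x => F |x|) (volume.restrict (Iic 0 ∪ Ioi 0)) :=
    int_Iic.union int_Ioi
  rwa [Iic_union_Ioi, Measure.restrict_univ] at this

lemma integrable_majorant {p : ℝ} (hp : 0 ≤ p) :
    Integrable fun t : ℝ => |t| ^ p * Real.exp (-|t|) := by
  apply integrable_comp_abs' (F := fun u => u ^ p * Real.exp (-u))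
  have h := Real.GammaIntegral_convergent (s := p + 1) (by linarith)
  rw [show p + 1 - 1 = p by ring] at h
  apply h.congr_fun (fun x hx => ?_) measurableSet_Ioi
  rw [mul_comm]

lemma integral_majorant {p : ℝ} (hp : 0 ≤ p) :
    ∫ t : ℝ, |t| ^ p * Real.exp (-|t|) = 2 * Real.Gamma (p + 1) := by
  rw [integral_comp_abs (f := fun u => u ^ p * Real.exp (-u))]
  congr 1
  rw [Real.Gamma_eq_integral (by linarith : (0:ℝ) < p + 1)]
  rw [show p + 1 - 1 = p by ring]
  apply setIntegral_congr_fun measurableSet_Ioi (fun x hx => ?_)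
  rw [mul_comm]

lemma key_upper {a : ℝ} (ha : -1 ≤ a) (ha' : a ≤ 0) (t : ℝ) :
    Real.exp (a + t) * Real.exp (-(Real.exp (a + t)) ^ 2 / 2) ≤ 2 * Real.exp (-|t|) := by
  have hsq : (Real.exp (a + t)) ^ 2 = Real.exp (2 * (a + t)) := by
    rw [← Real.exp_nat_mul]; norm_num [mul_comm]
  rw [hsq, ← Real.exp_add]
  rcases le_total t 0 with ht | ht
  · rw [abs_of_nonpos ht, neg_neg]
    have h1 : Real.exp (a + t + -Real.exp (2 * (a + t)) / 2) ≤ Real.exp t := by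
      apply Real.exp_le_exp.mpr
      nlinarith [Real.exp_pos (2 * (a + t))]
    nlinarith [Real.exp_pos t]
  · rw [abs_of_nonneg ht]
    have key : ∀ u : ℝ, u - Real.exp u / 2 ≤ Real.log 2 - 1 := by
      intro u
      have h2 : u - Real.log 2 + 1 ≤ Real.exp (u - Real.log 2) := Real.add_one_le_exp _
      rw [Real.exp_sub, Real.exp_log two_pos] at h2
      linarith
    have h3 : a + t + -Real.exp (2 * (a + t)) / 2 ≤ Real.log 2 + -t := by
      have := key (2 * (a + t))
      linarith
    calc Real.exp (a + t + -Real.exp (2 * (a + t)) / 2)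
        ≤ Real.exp (Real.log 2 + -t) := Real.exp_le_exp.mpr h3
      _ = 2 * Real.exp (-t) := by rw [Real.exp_add, Real.exp_log two_pos]

lemma core {a : ℝ} (ha : -1 ≤ a) (ha' : a ≤ 0) (t : ℝ) :
    Real.exp (a + t) * phi (Real.exp (a + t)) ≤ (Real.sqrt (2*π))⁻¹ * (2 * Real.exp (-|t|)) := by
  unfold phi
  calc Real.exp (a+t) * ((Real.sqrt (2*π))⁻¹ * Real.exp (-(Real.exp (a+t))^2/2))
      = (Real.sqrt (2*π))⁻¹ * (Real.exp (a+t) * Real.exp (-(Real.exp (a+t))^2/2)) := by ring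
    _ ≤ (Real.sqrt (2*π))⁻¹ * (2 * Real.exp (-|t|)) := by
        have := key_upper ha ha' t
        have h0 : (0:ℝ) ≤ (Real.sqrt (2*π))⁻¹ := inv_nonneg.mpr (Real.sqrt_nonneg _)
        exact mul_le_mul_of_nonneg_left this h0

lemma main_eq (a : ℝ) (G : ℝ → ℝ) :
    ∫ x, phi x * G (Real.log |x| - a)
      = 2 * ∫ t, Real.exp (a + t) * (phi (Real.exp (a + t)) * G t) := by
  have e1 : (fun x => phi x * G (Real.log |x| - a))
      = fun x => (fun u => phi u * G (Real.log u - a)) |x| := by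
    funext x
    simp only [phi, sq_abs]
  rw [e1, integral_comp_abs (f := fun u => phi u * G (Real.log u - a)), cov_eq a]
  have e2 : (fun t => Real.exp (a + t) * (phi (Real.exp (a + t)) * G (Real.log (Real.exp (a + t)) - a)))
      = fun t => Real.exp (a + t) * (phi (Real.exp (a + t)) * G t) := by
    funext t
    rw [Real.log_exp, add_sub_cancel_left]
  simp only [e2]

lemma main_int (a : ℝ) (G : ℝ → ℝ)
    (h : Integrable fun t => Real.exp (a + t) * (phi (Real.exp (a + t)) * G t)) :
    Integrable fun x => phi x * G (Real.log |x| - a) := by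
  have e1 : (fun x => phi x * G (Real.log |x| - a))
      = fun x => (fun u => phi u * G (Real.log u - a)) |x| := by
    funext x
    simp only [phi, sq_abs]
  rw [e1]
  apply integrable_comp_abs' (F := fun u => phi u * G (Real.log u - a))
  apply cov_int a
  apply h.congr
  filter_upwards with t
  rw [Real.log_exp, add_sub_cancel_left]


lemma h_integrable {a p : ℝ} (ha : -1 ≤ a) (ha' : a ≤ 0) (hp : 0 ≤ p) :
    Integrable fun t : ℝ => Real.exp (a + t) * (phi (Real.exp (a + t)) * |t| ^ p) := by
  apply Integrable.mono' ((integrable_majorant hp).const_mul ((Real.sqrt (2*π))⁻¹ * 2))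
  · have c1 : Continuous fun t : ℝ => Real.exp (a + t) := by fun_prop
    have c2 : Continuous fun t : ℝ => |t| ^ p :=
      continuous_abs.rpow_const (fun x => Or.inr hp)
    exact (c1.mul ((continuous_phi.comp c1).mul c2)).aestronglyMeasurable
  · filter_upwards with t
    have h1 : (0:ℝ) ≤ |t| ^ p := Real.rpow_nonneg (abs_nonneg t) p
    have hnn : (0:ℝ) ≤ Real.exp (a+t) * (phi (Real.exp (a+t)) * |t| ^ p) :=
      mul_nonneg (Real.exp_pos _).le (mul_nonneg (phi_nonneg _) h1)
    rw [Real.norm_eq_abs, abs_of_nonneg hnn]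
    calc Real.exp (a+t) * (phi (Real.exp (a+t)) * |t| ^ p)
        = (Real.exp (a+t) * phi (Real.exp (a+t))) * |t| ^ p := by ring
      _ ≤ ((Real.sqrt (2*π))⁻¹ * (2 * Real.exp (-|t|))) * |t| ^ p :=
          mul_le_mul_of_nonneg_right (core ha ha' t) h1
      _ = (Real.sqrt (2*π))⁻¹ * 2 * (|t| ^ p * Real.exp (-|t|)) := by ring

lemma hlog_integrable :
    Integrable fun t : ℝ => Real.exp ((0:ℝ) + t) * (phi (Real.exp ((0:ℝ) + t)) * t) := by
  apply Integrable.mono' ((integrable_majorant zero_le_one).const_mul ((Real.sqrt (2*π))⁻¹ * 2))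
  · have c1 : Continuous fun t : ℝ => Real.exp ((0:ℝ) + t) := by fun_prop
    exact (c1.mul ((continuous_phi.comp c1).mul continuous_id)).aestronglyMeasurable
  · filter_upwards with t
    have h1 : (0:ℝ) ≤ |t| := abs_nonneg t
    rw [Real.norm_eq_abs, abs_mul, abs_mul, abs_of_pos (Real.exp_pos _),
      abs_of_nonneg (phi_nonneg _), Real.rpow_one]
    calc Real.exp (0+t) * (phi (Real.exp (0+t)) * |t|)
        = (Real.exp (0+t) * phi (Real.exp (0+t))) * |t| := by ring
      _ ≤ ((Real.sqrt (2*π))⁻¹ * (2 * Real.exp (-|t|))) * |t| :=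
          mul_le_mul_of_nonneg_right (core (by norm_num) le_rfl t) h1
      _ = (Real.sqrt (2*π))⁻¹ * 2 * (|t| * Real.exp (-|t|)) := by ring

lemma A_int : Integrable fun x : ℝ => phi x * Real.log |x| := by
  have := main_int 0 (fun t => t) hlog_integrable
  simpa using this

lemma A_eq : (∫ x, phi x * Real.log |x|)
    = 2 * ∫ t, Real.exp ((0:ℝ) + t) * (phi (Real.exp ((0:ℝ) + t)) * t) := by
  have := main_eq 0 (fun t => t)
  simpa using this

lemma phi_eq : gaussianPDFReal 0 1 = phi := by
  funext x
  simp only [gaussianPDFReal, phi, NNReal.coe_one, mul_one, sub_zero]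

lemma phi_integrable : Integrable phi := by
  have h := integrable_gaussianPDFReal 0 1
  rwa [phi_eq] at h

lemma phi_integral_one : ∫ x, phi x = 1 := by
  have h := integral_gaussianPDFReal_eq_one 0 (v := 1) one_ne_zero
  rwa [phi_eq] at h

lemma int_Iio_gamma {p : ℝ} (hp : 0 ≤ p) :
    ∫ t in Iio (0:ℝ), |t| ^ p * Real.exp t = Real.Gamma (p+1) := by
  rw [← integral_Iic_eq_integral_Iio]
  have h := integral_comp_neg_Iic (0:ℝ) (fun s => |s| ^ p * Real.exp (-s))
  simp only [abs_neg, neg_neg, neg_zero] at h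
  rw [h, Real.Gamma_eq_integral (by linarith : (0:ℝ) < p + 1), show p + 1 - 1 = p by ring]
  apply setIntegral_congr_fun measurableSet_Ioi (fun x hx => ?_)
  rw [abs_of_pos hx, mul_comm]

lemma int_Iio_texp : ∫ t in Iio (0:ℝ), t * Real.exp t = -1 := by
  have h1 : ∫ t in Iio (0:ℝ), t * Real.exp t
      = ∫ t in Iio (0:ℝ), -(|t| ^ (1:ℝ) * Real.exp t) := by
    apply setIntegral_congr_fun measurableSet_Iio (fun t ht => ?_)
    rw [Real.rpow_one, abs_of_neg ht]; ring
  rw [h1, integral_neg, int_Iio_gamma zero_le_one]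
  norm_num [Real.Gamma_two]

lemma A_lower : -1 ≤ ∫ x, phi x * Real.log |x| := by
  rw [A_eq]
  have hint : Integrable fun t : ℝ =>
      Real.exp ((0:ℝ) + t) * (phi (Real.exp ((0:ℝ) + t)) * t) := hlog_integrable
  have hsplit := (intervalIntegral.integral_Iio_add_Ici (b := (0:ℝ))
    hint.integrableOn hint.integrableOn).symm
  have h2 : 0 ≤ ∫ t in Ici (0:ℝ),
      Real.exp ((0:ℝ) + t) * (phi (Real.exp ((0:ℝ) + t)) * t) :=
    setIntegral_nonneg measurableSet_Ici fun t ht =>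
      mul_nonneg (Real.exp_pos _).le (mul_nonneg (phi_nonneg _) ht)
  have hlow_int : IntegrableOn
      (fun t : ℝ => (Real.sqrt (2*π))⁻¹ * (t * Real.exp t)) (Iio 0) := by
    apply Integrable.mono'
      (((integrable_majorant zero_le_one).const_mul ((Real.sqrt (2*π))⁻¹)).restrict (s := Iio 0))
    · exact (by fun_prop : Continuous fun t : ℝ => (Real.sqrt (2*π))⁻¹ * (t * Real.exp t)).aestronglyMeasurable
    · rw [ae_restrict_iff' measurableSet_Iio]
      filter_upwards with t ht
      have h4 : (0:ℝ) ≤ (Real.sqrt (2*π))⁻¹ := inv_nonneg.mpr (Real.sqrt_nonneg _)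
      rw [Real.norm_eq_abs, abs_mul, abs_of_nonneg h4, abs_mul, abs_of_pos (Real.exp_pos _),
        Real.rpow_one, abs_of_neg ht, show -(-t) = t by ring]
  have h3 : ∫ t in Iio (0:ℝ), ((Real.sqrt (2*π))⁻¹ * (t * Real.exp t))
      ≤ ∫ t in Iio (0:ℝ), Real.exp ((0:ℝ) + t) * (phi (Real.exp ((0:ℝ) + t)) * t) := by
    apply setIntegral_mono_on hlow_int hint.integrableOn measurableSet_Iio
    intro t ht
    rw [mem_Iio] at ht
    have hb : Real.exp t * phi (Real.exp t) ≤ Real.exp t * (Real.sqrt (2*π))⁻¹ :=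
      mul_le_mul_of_nonneg_left (phi_le _) (Real.exp_pos _).le
    calc (Real.sqrt (2*π))⁻¹ * (t * Real.exp t)
        = (Real.exp t * (Real.sqrt (2*π))⁻¹) * t := by ring
      _ ≤ (Real.exp t * phi (Real.exp t)) * t := mul_le_mul_of_nonpos_right hb ht.le
      _ = Real.exp ((0:ℝ) + t) * (phi (Real.exp ((0:ℝ) + t)) * t) := by
          rw [zero_add]; ring
  have h5 : ∫ t in Iio (0:ℝ), ((Real.sqrt (2*π))⁻¹ * (t * Real.exp t))
      = (Real.sqrt (2*π))⁻¹ * (-1) := by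
    rw [MeasureTheory.integral_const_mul, int_Iio_texp]
  have h6 : (Real.sqrt (2*π))⁻¹ ≤ 1/2 := by
    rw [inv_le_comm₀ sqrt_two_pi_pos (by norm_num)]
    linarith [two_le_sqrt_two_pi]
  have h7 : (0:ℝ) ≤ (Real.sqrt (2*π))⁻¹ := inv_nonneg.mpr (Real.sqrt_nonneg _)
  rw [hsplit]
  linarith

lemma phi_abs_integrable : Integrable fun x : ℝ => phi x * |x| := by
  have h := ((integrable_mul_exp_neg_mul_sq (b := (1:ℝ)/2) (by norm_num)).abs).const_mul
    ((Real.sqrt (2*π))⁻¹)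
  apply h.congr (ae_of_all _ fun x => ?_)
  simp only [abs_mul, Real.abs_exp]
  unfold phi
  rw [show -(1/2) * x^2 = -x^2/2 by ring]
  ring

lemma int_Ioi_xexp : ∫ u in Ioi (0:ℝ), u * Real.exp (-u^2/2) = 1 := by
  have hderiv : ∀ x ∈ Ioi (0:ℝ),
      HasDerivAt (fun u : ℝ => -Real.exp (-u^2/2)) (x * Real.exp (-x^2/2)) x := by
    intro x _
    have h0 : HasDerivAt (fun u : ℝ => u^2) (2*x) x := by simpa using hasDerivAt_pow 2 x
    have h2 : HasDerivAt (fun u : ℝ => -u^2/2) (-(2*x)/2) x := h0.neg.div_const 2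
    have h1 : HasDerivAt (fun u : ℝ => -u^2/2) (-x) x := by
      convert h2 using 1; ring
    have h3 := (h1.exp).neg
    exact h3.congr_deriv (by ring)
  have hcont : ContinuousWithinAt (fun u : ℝ => -Real.exp (-u^2/2)) (Ici 0) 0 :=
    (by fun_prop : Continuous fun u : ℝ => -Real.exp (-u^2/2)).continuousWithinAt
  have hint : IntegrableOn (fun x : ℝ => x * Real.exp (-x^2/2)) (Ioi 0) := by
    have h := integrable_mul_exp_neg_mul_sq (b := (1:ℝ)/2) (by norm_num)
    have he : (fun x : ℝ => x * Real.exp (-(1/2) * x^2))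
        = fun x : ℝ => x * Real.exp (-x^2/2) :=
      funext fun x => by rw [show -(1/2) * x^2 = -x^2/2 by ring]
    rw [he] at h
    exact h.integrableOn
  have htend : Tendsto (fun u : ℝ => -Real.exp (-u^2/2)) atTop (nhds 0) := by
    rw [show (0:ℝ) = -0 by norm_num]
    apply Tendsto.neg
    apply Real.tendsto_exp_atBot.comp
    have h1 : Tendsto (fun u : ℝ => u^2/2) atTop atTop :=
      Tendsto.atTop_div_const (by norm_num) (tendsto_pow_atTop two_ne_zero)
    have h2 : (fun u : ℝ => -u^2/2) = fun u : ℝ => -(u^2/2) :=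
      funext fun u => by ring
    rw [h2]
    exact tendsto_neg_atBot_iff.mpr h1
  have h := integral_Ioi_of_hasDerivAt_of_tendsto hcont hderiv hint htend
  simpa using h

lemma phi_abs_integral : ∫ x, phi x * |x| ≤ 1 := by
  have e1 : (fun x : ℝ => phi x * |x|) = fun x => (fun u => phi u * u) |x| :=
    funext fun x => by simp only [phi, sq_abs]
  rw [e1, integral_comp_abs (f := fun u => phi u * u)]
  have hIoi : ∫ u in Ioi (0:ℝ), phi u * u
      = (Real.sqrt (2*π))⁻¹ * ∫ u in Ioi (0:ℝ), u * Real.exp (-u^2/2) := by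
    rw [← MeasureTheory.integral_const_mul]
    apply setIntegral_congr_fun measurableSet_Ioi (fun u hu => ?_)
    unfold phi; ring
  rw [hIoi, int_Ioi_xexp]
  have h6 : (Real.sqrt (2*π))⁻¹ ≤ 1/2 := by
    rw [inv_le_comm₀ sqrt_two_pi_pos (by norm_num)]
    linarith [two_le_sqrt_two_pi]
  linarith

lemma A_upper : (∫ x, phi x * Real.log |x|) ≤ 0 := by
  have h0 : ∀ᵐ x : ℝ, x ≠ 0 := by
    rw [ae_iff]
    simp only [ne_eq, not_not, setOf_eq_eq_singleton]
    exact Real.volume_singleton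
  have hsubint : Integrable fun x : ℝ => phi x * (|x| - 1) := by
    apply (phi_abs_integrable.sub phi_integrable).congr (ae_of_all _ fun x => ?_)
    simp only [Pi.sub_apply]
    ring
  have hmono : (∫ x, phi x * Real.log |x|) ≤ ∫ x, phi x * (|x| - 1) := by
    apply integral_mono_ae A_int hsubint
    filter_upwards [h0] with x hx
    exact mul_le_mul_of_nonneg_left
      (Real.log_le_sub_one_of_pos (abs_pos.mpr hx)) (phi_nonneg x)
  have hsub : (∫ x, phi x * (|x| - 1)) = (∫ x, phi x * |x|) - 1 := by
    have he : (fun x : ℝ => phi x * (|x| - 1)) = fun x => phi x * |x| - phi x :=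
      funext fun x => by ring
    rw [he, integral_sub phi_abs_integrable phi_integrable, phi_integral_one]
  linarith [phi_abs_integral]

lemma h_le {a p : ℝ} (ha : -1 ≤ a) (ha' : a ≤ 0) (hp : 0 ≤ p) (t : ℝ) :
    Real.exp (a+t) * (phi (Real.exp (a+t)) * |t| ^ p)
      ≤ (Real.sqrt (2*π))⁻¹ * 2 * (|t| ^ p * Real.exp (-|t|)) := by
  have h1 : (0:ℝ) ≤ |t| ^ p := Real.rpow_nonneg (abs_nonneg t) p
  calc Real.exp (a+t) * (phi (Real.exp (a+t)) * |t| ^ p)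
      = (Real.exp (a+t) * phi (Real.exp (a+t))) * |t| ^ p := by ring
    _ ≤ ((Real.sqrt (2*π))⁻¹ * (2 * Real.exp (-|t|))) * |t| ^ p :=
        mul_le_mul_of_nonneg_right (core ha ha' t) h1
    _ = (Real.sqrt (2*π))⁻¹ * 2 * (|t| ^ p * Real.exp (-|t|)) := by ring

lemma main_bounds {p : ℝ} (hp : 2 ≤ p) :
    (1/4 : ℝ)^p * Real.Gamma (p+1)
        ≤ (∫ x, phi x * |Real.log |x| - (∫ w, phi w * Real.log |w|)| ^ p)
    ∧ (∫ x, phi x * |Real.log |x| - (∫ w, phi w * Real.log |w|)| ^ p)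
        ≤ (6:ℝ)^p * Real.Gamma (p+1) := by
  set A := ∫ w, phi w * Real.log |w| with hA
  have hA1 : -1 ≤ A := A_lower
  have hA0 : A ≤ 0 := A_upper
  have hp0 : (0:ℝ) < p := by linarith
  have hΓ : 0 < Real.Gamma (p+1) := Real.Gamma_pos_of_pos (by linarith)
  have hE : (∫ x, phi x * |Real.log |x| - A| ^ p)
      = 2 * ∫ t, Real.exp (A + t) * (phi (Real.exp (A + t)) * |t| ^ p) :=
    main_eq A (fun t => |t| ^ p)
  have hint := h_integrable hA1 hA0 hp0.le
  have hsqpos : (0:ℝ) ≤ (Real.sqrt (2*π))⁻¹ := inv_nonneg.mpr (Real.sqrt_nonneg _)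
  have h6 : (Real.sqrt (2*π))⁻¹ ≤ 1/2 := by
    rw [inv_le_comm₀ sqrt_two_pi_pos (by norm_num)]
    linarith [two_le_sqrt_two_pi]
  have h6' : (1:ℝ)/3 ≤ (Real.sqrt (2*π))⁻¹ := by
    rw [show (1:ℝ)/3 = 3⁻¹ by norm_num, inv_le_inv₀ (by norm_num) sqrt_two_pi_pos]
    exact sqrt_two_pi_le_three
  -- upper bound on the t-integral
  have hub : (∫ t, Real.exp (A+t) * (phi (Real.exp (A+t)) * |t| ^ p))
      ≤ (Real.sqrt (2*π))⁻¹ * 2 * (2 * Real.Gamma (p+1)) := by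
    have h := integral_mono hint
      ((integrable_majorant hp0.le).const_mul ((Real.sqrt (2*π))⁻¹ * 2))
      (h_le hA1 hA0 hp0.le)
    rwa [MeasureTheory.integral_const_mul, integral_majorant hp0.le] at h
  -- lower bound on the t-integral
  set c := (Real.sqrt (2*π))⁻¹ * (Real.exp A * Real.exp (-(1:ℝ)/2)) with hc
  have hcpos : 0 ≤ c := mul_nonneg hsqpos (mul_nonneg (Real.exp_pos _).le (Real.exp_pos _).le)
  have hnn : ∀ t : ℝ, 0 ≤ Real.exp (A+t) * (phi (Real.exp (A+t)) * |t| ^ p) := fun t =>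
    mul_nonneg (Real.exp_pos _).le
      (mul_nonneg (phi_nonneg _) (Real.rpow_nonneg (abs_nonneg t) p))
  have step1 : (∫ t in Iio (0:ℝ), Real.exp (A+t) * (phi (Real.exp (A+t)) * |t| ^ p))
      ≤ ∫ t, Real.exp (A+t) * (phi (Real.exp (A+t)) * |t| ^ p) :=
    setIntegral_le_integral hint (ae_of_all _ hnn)
  have hLint : IntegrableOn (fun t : ℝ => c * (|t| ^ p * Real.exp t)) (Iio 0) := by
    apply Integrable.mono'
      (((integrable_majorant hp0.le).const_mul c).restrict (s := Iio 0))
    · have c2 : Continuous fun t : ℝ => |t| ^ p :=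
        continuous_abs.rpow_const (fun x => Or.inr hp0.le)
      exact ((continuous_const.mul (c2.mul Real.continuous_exp))).aestronglyMeasurable
    · rw [ae_restrict_iff' measurableSet_Iio]
      filter_upwards with t ht
      have h1 : (0:ℝ) ≤ |t| ^ p := Real.rpow_nonneg (abs_nonneg t) p
      rw [Real.norm_eq_abs, abs_mul, abs_of_nonneg hcpos, abs_mul, abs_of_nonneg h1,
        Real.abs_exp, abs_of_neg ht, show -(-t) = t by ring]
  have step2 : (∫ t in Iio (0:ℝ), c * (|t| ^ p * Real.exp t))
      ≤ ∫ t in Iio (0:ℝ), Real.exp (A+t) * (phi (Real.exp (A+t)) * |t| ^ p) := by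
    apply setIntegral_mono_on hLint hint.integrableOn measurableSet_Iio
    intro t ht
    rw [mem_Iio] at ht
    have hsq : (Real.exp (A+t))^2 ≤ 1 := by
      rw [show (Real.exp (A+t))^2 = Real.exp (2*(A+t)) by
        rw [← Real.exp_nat_mul]; norm_num [mul_comm]]
      exact Real.exp_le_one_iff.mpr (by linarith)
    have hphi_ge : (Real.sqrt (2*π))⁻¹ * Real.exp (-(1:ℝ)/2) ≤ phi (Real.exp (A+t)) := by
      unfold phi
      apply mul_le_mul_of_nonneg_left _ hsqpos
      exact Real.exp_le_exp.mpr (by linarith)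
    have h1 : (0:ℝ) ≤ |t| ^ p := Real.rpow_nonneg (abs_nonneg t) p
    calc c * (|t| ^ p * Real.exp t)
        = (Real.exp A * Real.exp t) * (((Real.sqrt (2*π))⁻¹ * Real.exp (-(1:ℝ)/2)) * |t| ^ p) := by
          rw [hc]; ring
      _ ≤ (Real.exp A * Real.exp t) * (phi (Real.exp (A+t)) * |t| ^ p) := by
          apply mul_le_mul_of_nonneg_left
            (mul_le_mul_of_nonneg_right hphi_ge h1)
            (mul_nonneg (Real.exp_pos _).le (Real.exp_pos _).le)
      _ = Real.exp (A+t) * (phi (Real.exp (A+t)) * |t| ^ p) := by rw [Real.exp_add]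
  have step3 : (∫ t in Iio (0:ℝ), c * (|t| ^ p * Real.exp t)) = c * Real.Gamma (p+1) := by
    rw [MeasureTheory.integral_const_mul, int_Iio_gamma hp0.le]
  -- numeric bound on c
  have hexp2 : (1:ℝ)/8 ≤ Real.exp (-(2:ℝ)) := by
    rw [Real.exp_neg]
    rw [show (1:ℝ)/8 = 8⁻¹ by norm_num, inv_le_inv₀ (by norm_num) (Real.exp_pos _)]
    exact exp_two_le_eight
  have hcl : (1:ℝ)/24 ≤ c := by
    have h1 : Real.exp (-(2:ℝ)) ≤ Real.exp A * Real.exp (-(1:ℝ)/2) := by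
      rw [← Real.exp_add]
      exact Real.exp_le_exp.mpr (by linarith)
    have h2 : Real.exp A * Real.exp (-(1:ℝ)/2) ≤ 1 := by
      rw [← Real.exp_add]
      exact Real.exp_le_one_iff.mpr (by linarith)
    rw [hc]
    nlinarith
  -- rpow numerics
  have h16 : (1/4:ℝ)^p ≤ 1/16 := by
    have h1 : (1/4:ℝ)^p ≤ (1/4:ℝ)^(2:ℝ) :=
      Real.rpow_le_rpow_of_exponent_ge (by norm_num) (by norm_num) hp
    have h2 : (1/4:ℝ)^(2:ℝ) = 1/16 := by
      rw [show (2:ℝ) = ((2:ℕ):ℝ) by norm_num, Real.rpow_natCast]; norm_num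
    linarith
  have h36 : (36:ℝ) ≤ (6:ℝ)^p := by
    have h1 : (6:ℝ)^(2:ℝ) ≤ (6:ℝ)^p :=
      Real.rpow_le_rpow_of_exponent_le (by norm_num) hp
    have h2 : (6:ℝ)^(2:ℝ) = 36 := by
      rw [show (2:ℝ) = ((2:ℕ):ℝ) by norm_num, Real.rpow_natCast]; norm_num
    linarith
  constructor
  · rw [hE]
    have hchain : c * Real.Gamma (p+1)
        ≤ ∫ t, Real.exp (A+t) * (phi (Real.exp (A+t)) * |t| ^ p) := by
      linarith [step1, step2, step3.ge, step3.le]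
    calc (1/4:ℝ)^p * Real.Gamma (p+1) ≤ (1/16) * Real.Gamma (p+1) :=
          mul_le_mul_of_nonneg_right h16 hΓ.le
      _ ≤ 2 * (c * Real.Gamma (p+1)) := by nlinarith
      _ ≤ 2 * ∫ t, Real.exp (A+t) * (phi (Real.exp (A+t)) * |t| ^ p) := by linarith
  · rw [hE]
    have h4 : (Real.sqrt (2*π))⁻¹ * 2 * (2 * Real.Gamma (p+1)) ≤ 2 * Real.Gamma (p+1) := by
      nlinarith
    calc 2 * ∫ t, Real.exp (A+t) * (phi (Real.exp (A+t)) * |t| ^ p)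
        ≤ 2 * ((Real.sqrt (2*π))⁻¹ * 2 * (2 * Real.Gamma (p+1))) := by linarith
      _ ≤ 4 * Real.Gamma (p+1) := by linarith
      _ ≤ (6:ℝ)^p * Real.Gamma (p+1) := by nlinarith

end CLAG

end CLAG

open CLAG in
/-- For `W := log|Z| - a` with `Z` standard Gaussian and
`a := E[log|Z|]`, and `Θ` standard exponential (so `‖Θ‖_p = Γ(p+1)^{1/p}`),
one has `(1/4)‖Θ‖_p ≤ ‖W‖_p ≤ 6‖Θ‖_p` for all `p ≥ 2`. -/
theorem centered_log_abs_gaussian_moment_comparison :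
    ∃ c₁ c₂ : ℝ, c₁ = 1 / 4 ∧ c₂ = 6 ∧
      ∀ p : ℝ, 2 ≤ p →
        c₁ * Real.Gamma (p + 1) ^ (1 / p)
            ≤ (∫ z, |Real.log |z| - ∫ w, Real.log |w| ∂(gaussianReal 0 1)| ^ p
                  ∂(gaussianReal 0 1)) ^ (1 / p) ∧
        (∫ z, |Real.log |z| - ∫ w, Real.log |w| ∂(gaussianReal 0 1)| ^ p
              ∂(gaussianReal 0 1)) ^ (1 / p)
            ≤ c₂ * Real.Gamma (p + 1) ^ (1 / p) := by
  refine ⟨1/4, 6, rfl, rfl, fun p hp => ?_⟩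
  have hp0 : (0:ℝ) < p := by linarith
  have hΓ : 0 < Real.Gamma (p+1) := Real.Gamma_pos_of_pos (by linarith)
  have hconv : (∫ z, |Real.log |z| - ∫ w, Real.log |w| ∂(gaussianReal 0 1)| ^ p
        ∂(gaussianReal 0 1))
      = ∫ x, phi x * |Real.log |x| - (∫ w, phi w * Real.log |w|)| ^ p := by
    rw [gaussian_integral_eq (fun w => Real.log |w|)]
    exact gaussian_integral_eq
      (fun z => |Real.log |z| - (∫ w, phi w * Real.log |w|)| ^ p)
  obtain ⟨hlo, hhi⟩ := main_bounds hp
  have hE0 : (0:ℝ) ≤ ∫ x, phi x * |Real.log |x| - (∫ w, phi w * Real.log |w|)| ^ p :=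
    integral_nonneg fun x =>
      mul_nonneg (phi_nonneg x) (Real.rpow_nonneg (abs_nonneg _) p)
  rw [hconv]
  constructor
  · have h1 : ((1/4:ℝ)^p * Real.Gamma (p+1))^(1/p)
        ≤ (∫ x, phi x * |Real.log |x| - (∫ w, phi w * Real.log |w|)| ^ p)^(1/p) :=
      Real.rpow_le_rpow (by positivity) hlo (by positivity)
    calc (1/4:ℝ) * Real.Gamma (p+1)^(1/p)
        = ((1/4:ℝ)^p)^(1/p) * Real.Gamma (p+1)^(1/p) := by
          rw [← Real.rpow_mul (by norm_num : (0:ℝ) ≤ 1/4),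
            mul_one_div_cancel (ne_of_gt hp0), Real.rpow_one]
      _ = ((1/4:ℝ)^p * Real.Gamma (p+1))^(1/p) :=
          (Real.mul_rpow (Real.rpow_nonneg (by norm_num) p) hΓ.le).symm
      _ ≤ _ := h1
  · have h1 : (∫ x, phi x * |Real.log |x| - (∫ w, phi w * Real.log |w|)| ^ p)^(1/p)
        ≤ ((6:ℝ)^p * Real.Gamma (p+1))^(1/p) :=
      Real.rpow_le_rpow hE0 hhi (by positivity)
    calc (∫ x, phi x * |Real.log |x| - (∫ w, phi w * Real.log |w|)| ^ p)^(1/p)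
        ≤ ((6:ℝ)^p * Real.Gamma (p+1))^(1/p) := h1
      _ = ((6:ℝ)^p)^(1/p) * Real.Gamma (p+1)^(1/p) :=
          Real.mul_rpow (Real.rpow_nonneg (by norm_num) p) hΓ.le
      _ = 6 * Real.Gamma (p+1)^(1/p) := by
          rw [← Real.rpow_mul (by norm_num : (0:ℝ) ≤ 6),
            mul_one_div_cancel (ne_of_gt hp0), Real.rpow_one]
end

section
/- Let Z₁,…,Zₙ be independent standard real Gaussians, a := E[log|Z₁|], and θ ∈ S^{n-1}. Then there exist absolute constants C, C′ > 0 such that for all t > 0, P( |Σ_{i=1}^n θ_i log|Z_i| − a Σ_{i=1}^n θ_i| ≥ t ) ≤ C′ exp( −C · min{ t/‖θ‖_∞ , t² } ). -/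
open Real MeasureTheory ProbabilityTheory
open scoped NNReal


lemma L1 (y : ℝ) : rexp y ≤ 1 + y + y^2 * (rexp y + rexp (-y)) := by
  rcases le_or_gt (-1) y with hy | hy
  · have h1 : (1 - y) * rexp y ≤ 1 := by
      have := Real.add_one_le_exp (-y)
      calc (1 - y) * rexp y ≤ rexp (-y) * rexp y := by
            apply mul_le_mul_of_nonneg_right _ (exp_pos y).le
            linarith
        _ = 1 := by rw [← Real.exp_add]; simp
    nlinarith [exp_pos y, exp_pos (-y), sq_nonneg y, mul_nonneg (sq_nonneg y) (exp_pos (-y)).le]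
  · have h0 : rexp y ≤ 1 := by
      apply (Real.exp_le_one_iff).2; linarith
    have h2 : -y ≤ rexp (-y) := by linarith [Real.add_one_le_exp (-y)]
    have h3 : (1:ℝ) ≤ y^2 := by nlinarith
    have h4 : -y ≤ y^2 * rexp (-y) := by nlinarith [exp_pos (-y)]
    nlinarith [mul_nonneg (sq_nonneg y) (exp_pos y).le]

lemma L2 (x : ℝ) : x^2 ≤ 64 * rexp (|x| / 4) := by
  have h : |x|/8 + 1 ≤ rexp (|x|/8) := Real.add_one_le_exp _
  have h2 : (|x| / 8) ^ 2 ≤ rexp (|x| / 8) ^ 2 := by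
    apply sq_le_sq'
    · nlinarith [exp_pos (|x|/8), abs_nonneg x]
    · nlinarith [abs_nonneg x]
  have h3 : rexp (|x| / 8) ^ 2 = rexp (|x| / 4) := by
    rw [sq, ← Real.exp_add]; ring_nf
  have h4 : x^2 = |x|^2 := (sq_abs x).symm
  nlinarith

lemma L3 {s : ℝ} (hs : |s| ≤ 1/2) (x : ℝ) :
    rexp (s*x) ≤ 1 + s*x + 128 * s^2 * (rexp ((3/4)*x) + rexp (-((3/4)*x))) := by
  have key := L1 (s*x)
  have hsx : |s*x| ≤ |x|/2 := by
    rw [abs_mul]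
    calc |s| * |x| ≤ (1/2) * |x| := by
          apply mul_le_mul_of_nonneg_right hs (abs_nonneg x)
      _ = |x|/2 := by ring
  have he1 : rexp (s*x) ≤ rexp (|x|/2) := Real.exp_le_exp.2 ((le_abs_self _).trans hsx)
  have he2 : rexp (-(s*x)) ≤ rexp (|x|/2) := Real.exp_le_exp.2 ((neg_le_abs _).trans hsx)
  have hx2 : x^2 ≤ 64 * rexp (|x|/4) := L2 x
  have hmax : rexp (3*|x|/4) ≤ rexp ((3/4)*x) + rexp (-((3/4)*x)) := by
    rcases abs_cases x with ⟨h, _⟩ | ⟨h, _⟩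
    · have : 3*|x|/4 = (3/4)*x := by rw [h]; ring
      rw [this]; linarith [exp_pos (-((3/4)*x))]
    · have : 3*|x|/4 = -((3/4)*x) := by rw [h]; ring
      rw [this]; linarith [exp_pos ((3/4)*x)]
  have hprod : rexp (3*|x|/4) = rexp (|x|/4) * rexp (|x|/2) := by
    rw [← Real.exp_add]; ring_nf
  have hcomb : (s*x)^2 * (rexp (s*x) + rexp (-(s*x))) ≤
      128 * s^2 * (rexp ((3/4)*x) + rexp (-((3/4)*x))) := by
    have e1 : (s*x)^2 * (rexp (s*x) + rexp (-(s*x))) ≤ s^2 * x^2 * (2 * rexp (|x|/2)) := by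
      rw [mul_pow]
      apply mul_le_mul_of_nonneg_left _ (by positivity)
      linarith
    have e2 : s^2 * x^2 * (2 * rexp (|x|/2)) ≤ s^2 * (64 * rexp (|x|/4)) * (2 * rexp (|x|/2)) := by
      apply mul_le_mul_of_nonneg_right _ (by positivity)
      exact mul_le_mul_of_nonneg_left hx2 (sq_nonneg s)
    have e3 : s^2 * (64 * rexp (|x|/4)) * (2 * rexp (|x|/2)) = 128 * s^2 * rexp (3*|x|/4) := by
      rw [hprod]; ring
    have e4 : 128 * s^2 * rexp (3*|x|/4) ≤ 128 * s^2 * (rexp ((3/4)*x) + rexp (-((3/4)*x))) := by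
      apply mul_le_mul_of_nonneg_left hmax (by positivity)
    linarith
  linarith

noncomputable def μ0 : Measure ℝ := gaussianReal 0 1

instance : IsProbabilityMeasure μ0 := inferInstanceAs (IsProbabilityMeasure (gaussianReal 0 1))

lemma μ0_eq : μ0 = volume.withDensity (gaussianPDF 0 1) :=
  gaussianReal_of_var_ne_zero 0 one_ne_zero

lemma coe_one_nn : ((1:ℝ≥0):ℝ) = 1 := NNReal.coe_one

lemma pdf_eq (z : ℝ) : gaussianPDFReal 0 1 z = (√(2*π))⁻¹ * rexp (-z^2/2) := by
  rw [gaussianPDFReal]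
  norm_num

lemma pdf_le_one (z : ℝ) : gaussianPDFReal 0 1 z ≤ 1 := by
  rw [pdf_eq]
  have h1 : rexp (-z^2/2) ≤ 1 := by
    rw [Real.exp_le_one_iff]
    nlinarith [sq_nonneg z]
  have h2 : (√(2*π))⁻¹ ≤ 1 := by
    rw [inv_le_one_iff₀]
    right
    nlinarith [Real.sq_sqrt (by positivity : (0:ℝ) ≤ 2*π), Real.sqrt_nonneg (2*π), pi_gt_three]
  calc (√(2*π))⁻¹ * rexp (-z^2/2) ≤ 1 * 1 :=
        mul_le_mul h2 h1 (exp_pos _).le zero_le_one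
    _ = 1 := by ring

lemma integrable_withDensity_μ0 {g : ℝ → ℝ} :
    Integrable g μ0 ↔ Integrable (fun z => g z * gaussianPDFReal 0 1 z) volume := by
  rw [μ0_eq, integrable_withDensity_iff (measurable_gaussianPDF 0 1)
    (Filter.Eventually.of_forall fun x => ENNReal.ofReal_lt_top)]
  simp_rw [gaussianPDF, ENNReal.toReal_ofReal (gaussianPDFReal_nonneg 0 1 _)]

lemma int_exp_lin (c : ℝ) : Integrable (fun z => rexp (c * z)) μ0 := by
  rw [integrable_withDensity_μ0]
  have heq : (fun z : ℝ => rexp (c * z) * gaussianPDFReal 0 1 z)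
      = fun z => ((√(2*π))⁻¹ * rexp (c^2/2)) * rexp (-(1/2) * (z - c)^2) := by
    funext z
    rw [pdf_eq, mul_comm (rexp (c*z)), mul_assoc, mul_assoc, ← Real.exp_add, ← Real.exp_add]
    congr 2
    ring
  rw [heq]
  exact ((integrable_exp_neg_mul_sq (by norm_num : (0:ℝ) < 1/2)).comp_sub_right c).const_mul _

lemma int_abs_μ0 : Integrable (fun z : ℝ => |z|) μ0 := by
  refine ((int_exp_lin 1).add (int_exp_lin (-1))).mono
    measurable_abs.aestronglyMeasurable (Filter.Eventually.of_forall fun z => ?_)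
  have h1 : z ≤ rexp (1*z) := by
    have := Real.add_one_le_exp (1*z); linarith
  have h2 : -z ≤ rexp ((-1)*z) := by
    have := Real.add_one_le_exp ((-1)*z); linarith
  simp only [Pi.add_apply, Real.norm_eq_abs, abs_abs]
  rw [abs_of_pos (show (0:ℝ) < rexp (1*z) + rexp (-1*z) by positivity)]
  exact abs_le.mpr ⟨by nlinarith [exp_pos ((1:ℝ)*z)], by nlinarith [exp_pos ((-1:ℝ)*z)]⟩

lemma int_pos34 : Integrable (fun z : ℝ => rexp ((3/4) * log |z|)) μ0 := by
  refine ((integrable_const (1:ℝ)).add int_abs_μ0).mono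
    ((Real.measurable_log.comp measurable_abs).const_mul _).exp.aestronglyMeasurable
    (Filter.Eventually.of_forall fun z => ?_)
  simp only [Pi.add_apply, Real.norm_eq_abs, Real.abs_exp]
  rw [abs_of_nonneg (by positivity : (0:ℝ) ≤ 1 + |z|)]
  rcases le_or_gt |z| 1 with h | h
  · have hl : log |z| ≤ 0 := Real.log_nonpos (abs_nonneg z) h
    have : rexp ((3/4) * log |z|) ≤ 1 := by
      rw [Real.exp_le_one_iff]; nlinarith
    nlinarith [abs_nonneg z]
  · have hl : 0 ≤ log |z| := Real.log_nonneg h.le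
    have : rexp ((3/4) * log |z|) ≤ rexp (log |z|) := by
      rw [Real.exp_le_exp]; nlinarith
    rw [Real.exp_log (by linarith)] at this
    linarith
open Real MeasureTheory ProbabilityTheory Set

lemma rint1 : IntegrableOn (fun z : ℝ => |z| ^ (-(3/4):ℝ)) (Ioc (0:ℝ) 1) volume := by
  have h : IntegrableOn (fun z : ℝ => z ^ (-(3/4):ℝ)) (Ioc (0:ℝ) 1) volume := by
    have := intervalIntegral.intervalIntegrable_rpow'
      (show (-1:ℝ) < -(3/4) by norm_num) (a := (0:ℝ)) (b := 1)
    rwa [intervalIntegrable_iff_integrableOn_Ioc_of_le (by norm_num)] at this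
  exact h.congr_fun (fun x hx => by rw [abs_of_pos hx.1]) measurableSet_Ioc

lemma cos_ne : Real.cos (-(3/4:ℝ) * π) ≠ 0 := by
  have h : (-(3/4:ℝ)) * π = -(π - π/4) := by ring
  rw [h, Real.cos_neg, Real.cos_pi_sub, Real.cos_pi_div_four]
  have : (0:ℝ) < √2 := by positivity
  intro h2
  rw [neg_eq_zero] at h2
  nlinarith

lemma rint2 : IntegrableOn (fun z : ℝ => |z| ^ (-(3/4):ℝ)) (Ioc (-1:ℝ) 0) volume := by
  have h : IntegrableOn (fun z : ℝ => z ^ (-(3/4):ℝ)) (Ioc (-1:ℝ) 0) volume := by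
    have := intervalIntegral.intervalIntegrable_rpow'
      (show (-1:ℝ) < -(3/4) by norm_num) (a := (-1:ℝ)) (b := 0)
    rwa [intervalIntegrable_iff_integrableOn_Ioc_of_le (by norm_num)] at this
  have h2 : IntegrableOn (fun z : ℝ => (Real.cos (-(3/4:ℝ) * π))⁻¹ * z ^ (-(3/4):ℝ))
      (Ioc (-1:ℝ) 0) volume := h.const_mul _
  refine h2.congr_fun (fun x hx => ?_) measurableSet_Ioc
  rcases lt_or_eq_of_le hx.2 with hx0 | hx0
  · dsimp only; rw [Real.rpow_def_of_neg hx0,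
      show Real.log x = Real.log |x| from (Real.log_abs x).symm,
      ← Real.rpow_def_of_pos (abs_pos.mpr hx0.ne)]
    rw [mul_comm (|x| ^ (-(3/4):ℝ)), ← mul_assoc, inv_mul_cancel₀ cos_ne, one_mul]
  · subst hx0; dsimp only; rw [abs_zero, Real.zero_rpow (by norm_num : (-(3/4):ℝ) ≠ 0), mul_zero]

lemma rint : IntegrableOn (fun z : ℝ => |z| ^ (-(3/4):ℝ)) (Icc (-1:ℝ) 1) volume := by
  rw [integrableOn_Icc_iff_integrableOn_Ioc,
    ← Set.Ioc_union_Ioc_eq_Ioc (by norm_num : (-1:ℝ) ≤ 0) (by norm_num : (0:ℝ) ≤ 1)]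
  exact rint2.union rint1

lemma int_neg34 : Integrable (fun z : ℝ => rexp (-(3/4) * log |z|)) μ0 := by
  rw [integrable_withDensity_μ0]
  have hmaj : Integrable (fun z : ℝ =>
      (Set.Icc (-1:ℝ) 1).indicator (fun z => |z| ^ (-(3/4):ℝ)) z + gaussianPDFReal 0 1 z)
      volume := by
    refine Integrable.add ?_ (integrable_gaussianPDFReal 0 1)
    rw [integrable_indicator_iff measurableSet_Icc]
    exact rint
  refine hmaj.mono ?_ (Filter.Eventually.of_forall fun z => ?_)
  · exact (((Real.measurable_log.comp measurable_abs).const_mul _).exp.mul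
      (measurable_gaussianPDFReal 0 1)).aestronglyMeasurable
  · have hpdf0 : 0 ≤ gaussianPDFReal 0 1 z := gaussianPDFReal_nonneg 0 1 z
    have hind0 : 0 ≤ (Set.Icc (-1:ℝ) 1).indicator (fun z => |z| ^ (-(3/4):ℝ)) z :=
      Set.indicator_nonneg (fun x _ => Real.rpow_nonneg (abs_nonneg x) _) z
    have hA : (0:ℝ) ≤ rexp (-(3/4) * log |z|) * gaussianPDFReal 0 1 z :=
      mul_nonneg (exp_pos _).le hpdf0
    have hB : (0:ℝ) ≤ (Set.Icc (-1:ℝ) 1).indicator (fun z => |z| ^ (-(3/4):ℝ)) z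
        + gaussianPDFReal 0 1 z := add_nonneg hind0 hpdf0
    rw [Real.norm_eq_abs, Real.norm_eq_abs, abs_of_nonneg hA, abs_of_nonneg hB]
    rcases eq_or_ne z 0 with hz | hz
    · subst hz
      simp only [abs_zero, Real.log_zero, mul_zero, Real.exp_zero, one_mul]
      linarith
    rcases le_or_gt |z| 1 with h1 | h1
    · have hzpos : 0 < |z| := abs_pos.mpr hz
      have hval : rexp (-(3/4) * log |z|) = |z| ^ (-(3/4):ℝ) := by
        rw [Real.rpow_def_of_pos hzpos, mul_comm]
      have hmem : z ∈ Set.Icc (-1:ℝ) 1 := abs_le.mp h1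
      rw [Set.indicator_of_mem hmem]
      calc rexp (-(3/4) * log |z|) * gaussianPDFReal 0 1 z
          ≤ rexp (-(3/4) * log |z|) * 1 :=
            mul_le_mul_of_nonneg_left (pdf_le_one z) (exp_pos _).le
        _ = |z| ^ (-(3/4):ℝ) := by rw [mul_one, hval]
        _ ≤ _ := le_add_of_nonneg_right hpdf0
    · have hl : 0 < log |z| := Real.log_pos h1
      have : rexp (-(3/4) * log |z|) ≤ 1 := by
        rw [Real.exp_le_one_iff]; nlinarith
      calc rexp (-(3/4) * log |z|) * gaussianPDFReal 0 1 z
          ≤ 1 * gaussianPDFReal 0 1 z := mul_le_mul_of_nonneg_right this hpdf0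
        _ = gaussianPDFReal 0 1 z := one_mul _
        _ ≤ _ := le_add_of_nonneg_left hind0

lemma int_u {u : ℝ} (hu : |u| ≤ 3/4) :
    Integrable (fun z : ℝ => rexp (u * log |z|)) μ0 := by
  refine (int_pos34.add int_neg34).mono
    ((Real.measurable_log.comp measurable_abs).const_mul _).exp.aestronglyMeasurable
    (Filter.Eventually.of_forall fun z => ?_)
  simp only [Pi.add_apply, Real.norm_eq_abs, Real.abs_exp]
  have hB : (0:ℝ) ≤ rexp ((3/4) * log |z|) + rexp (-(3/4) * log |z|) := by positivity
  rw [abs_of_nonneg hB]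
  have hb : u * log |z| ≤ (3/4) * log |z| ∨ u * log |z| ≤ -(3/4) * log |z| := by
    rcases le_or_gt 0 (log |z|) with h | h
    · left; nlinarith [abs_le.mp hu]
    · right; nlinarith [abs_le.mp hu]
  rcases hb with h | h
  · linarith [Real.exp_le_exp.2 h, exp_pos (-(3/4) * log |z|)]
  · linarith [Real.exp_le_exp.2 h, exp_pos ((3/4) * log |z|)]

lemma int_log_μ0 : Integrable (fun z : ℝ => log |z|) μ0 := by
  refine (((int_pos34.add int_neg34)).const_mul (4/3)).mono
    (Real.measurable_log.comp measurable_abs).aestronglyMeasurable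
    (Filter.Eventually.of_forall fun z => ?_)
  simp only [Pi.add_apply, Real.norm_eq_abs]
  have hB : (0:ℝ) ≤ 4/3 * (rexp ((3/4) * log |z|) + rexp (-(3/4) * log |z|)) := by positivity
  rw [abs_of_nonneg hB]
  have h1 : (3/4) * abs (log |z|) ≤ rexp ((3/4) * abs (log |z|)) := by
    linarith [Real.add_one_le_exp ((3/4) * abs (log |z|))]
  have h2 : rexp ((3/4) * abs (log |z|)) ≤ rexp ((3/4) * log |z|) + rexp (-(3/4) * log |z|) := by
    rcases abs_cases (log |z|) with ⟨h,_⟩|⟨h,_⟩ <;> rw [h]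
    · linarith [exp_pos (-(3/4) * log |z|)]
    · have : (3/4:ℝ) * -log |z| = -(3/4) * log |z| := by ring
      rw [this]
      linarith [exp_pos ((3/4) * log |z|)]
  linarith

lemma int_shift {u : ℝ} (hu : |u| ≤ 3/4) (a : ℝ) :
    Integrable (fun z : ℝ => rexp (u * (log |z| - a))) μ0 := by
  refine ((int_u hu).const_mul (rexp (-(u*a)))).congr
    (Filter.Eventually.of_forall fun z => ?_)
  show rexp (-(u*a)) * rexp (u * log |z|) = rexp (u * (log |z| - a))
  rw [← Real.exp_add]; congr 1; ring

lemma mgf_bound : ∃ K : ℝ, 1 ≤ K ∧ ∀ s : ℝ, |s| ≤ 1/2 →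
    ∫ z, rexp (s * (log |z| - ∫ x, log |x| ∂μ0)) ∂μ0 ≤ rexp (K * s^2) := by
  set a := ∫ x, log |x| ∂μ0 with ha
  have h34 : |(3/4 : ℝ)| ≤ 3/4 := by rw [abs_of_pos] <;> norm_num
  have h34' : |(-(3/4) : ℝ)| ≤ 3/4 := by rw [abs_neg, abs_of_pos] <;> norm_num
  set G : ℝ → ℝ := fun z => rexp ((3/4) * (log |z| - a)) + rexp ((-(3/4)) * (log |z| - a))
    with hG
  have hGint : Integrable G μ0 := (int_shift h34 a).add (int_shift h34' a)
  set B := ∫ z, G z ∂μ0 with hB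
  have hB0 : 0 ≤ B := integral_nonneg fun z => by positivity
  refine ⟨128*B + 1, by linarith, fun s hs => ?_⟩
  have hf_int : Integrable (fun z : ℝ => log |z| - a) μ0 :=
    int_log_μ0.sub (integrable_const a)
  have hmean : ∫ z, (log |z| - a) ∂μ0 = 0 := by
    rw [integral_sub int_log_μ0 (integrable_const a), integral_const]
    simp [measure_univ, ha]
  have hint1 : Integrable (fun z : ℝ => 1 + s*(log |z| - a) + 128*s^2 * G z) μ0 :=
    ((integrable_const 1).add (hf_int.const_mul s)).add (hGint.const_mul _)
  have hexp_int : Integrable (fun z : ℝ => rexp (s * (log |z| - a))) μ0 :=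
    int_shift (hs.trans (by norm_num)) a
  have hle : ∫ z, rexp (s * (log |z| - a)) ∂μ0
      ≤ ∫ z, (1 + s*(log |z| - a) + 128*s^2 * G z) ∂μ0 := by
    refine integral_mono hexp_int hint1 fun z => ?_
    have h3 := L3 hs (log |z| - a)
    have : rexp (-((3/4) * (log |z| - a))) = rexp ((-(3/4)) * (log |z| - a)) := by
      rw [neg_mul]
    rw [this] at h3
    simpa [hG] using h3
  have heval : ∫ z, (1 + s*(log |z| - a) + 128*s^2 * G z) ∂μ0 = 1 + 128*s^2 * B := by
    have hI0 : Integrable (fun _ : ℝ => (1:ℝ)) μ0 := integrable_const 1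
    have hIf : Integrable (fun z : ℝ => s * (log |z| - a)) μ0 := hf_int.const_mul s
    have hI1 : Integrable (fun z : ℝ => 1 + s*(log |z| - a)) μ0 := hI0.add hIf
    have hI2 : Integrable (fun z : ℝ => 128*s^2 * G z) μ0 := hGint.const_mul _
    rw [integral_add hI1 hI2, integral_add hI0 hIf,
      integral_const, integral_const_mul, integral_const_mul, hmean]
    simp [measure_univ, hB]
  rw [heval] at hle
  have hexp : 1 + (128*B+1) * s^2 ≤ rexp ((128*B+1) * s^2) := by
    linarith [Real.add_one_le_exp ((128*B+1) * s^2)]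
  nlinarith [sq_nonneg s]

open ProbabilityTheory MeasureTheory

lemma iIndepFun_ae_congr {Ω : Type} [MeasureSpace Ω] {n : ℕ} {Z W : Fin n → Ω → ℝ}
    (h : iIndepFun Z ℙ) (hae : ∀ i, Z i =ᵐ[ℙ] W i) :
    iIndepFun W ℙ := by
  rw [iIndepFun_iff_measure_inter_preimage_eq_mul] at h ⊢
  intro S sets hsets
  have hall : ∀ᵐ ω ∂(ℙ : Measure Ω), ∀ i, Z i ω = W i ω := ae_all_iff.2 hae
  have h1 : ∀ i, (W i ⁻¹' sets i : Set Ω) =ᵐ[(ℙ : Measure Ω)] (Z i ⁻¹' sets i : Set Ω) := by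
    intro i
    rw [Filter.eventuallyEq_set]
    filter_upwards [hae i] with ω hω
    simp [Set.mem_preimage, hω]
  have h2 : ((⋂ i ∈ S, W i ⁻¹' sets i : Set Ω)) =ᵐ[(ℙ : Measure Ω)]
      ((⋂ i ∈ S, Z i ⁻¹' sets i : Set Ω)) := by
    rw [Filter.eventuallyEq_set]
    filter_upwards [hall] with ω hω
    simp only [Set.mem_iInter, Set.mem_preimage]
    constructor <;> intro hh i hi
    · rw [hω i]; exact hh i hi
    · rw [← hω i]; exact hh i hi
  rw [measure_congr h2, h S hsets]
  exact Finset.prod_congr rfl fun i _ => (measure_congr (h1 i)).symm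

set_option maxHeartbeats 2000000 in
/-- There are absolute constants `C, C′ > 0` such that for
independent standard real Gaussians `Z₁,…,Zₙ`, `a := E[log|Z₁|]`, and any
unit vector `θ`, `P(|Σ θ_i log|Z_i| - a Σ θ_i| ≥ t) ≤
C′ exp(-C min{t/‖θ‖_∞, t²})` for all `t > 0`. -/
theorem gaussian_log_linear_combination_tail :
    ∃ C C' : ℝ, 0 < C ∧ 0 < C' ∧
      ∀ (Ω : Type) [MeasureSpace Ω], IsProbabilityMeasure (ℙ : Measure Ω) →
      ∀ (n : ℕ) (Z : Fin n → Ω → ℝ),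
        iIndepFun Z ℙ →
        (∀ i, (ℙ : Measure Ω).map (Z i) = gaussianReal 0 1) →
        ∀ θ : Fin n → ℝ, (∑ i, θ i ^ 2) = 1 →
        ∀ t : ℝ, 0 < t →
          (ℙ {ω | t ≤ |(∑ i, θ i * Real.log |Z i ω|)
              - (∫ z, Real.log |z| ∂(gaussianReal 0 1)) * ∑ i, θ i|}).toReal
            ≤ C' * Real.exp (-(C * min (t / (⨆ i, |θ i|)) (t ^ 2))) := by
  obtain ⟨K, hK1, hKmgf⟩ := mgf_bound
  have hK0 : (0:ℝ) < K := lt_of_lt_of_le one_pos hK1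
  refine ⟨1/(4*K), 2, by positivity, by norm_num, ?_⟩
  intro Ω _ hP n Z hindep hmap θ hθ t ht
  haveI := hP
  set a : ℝ := ∫ z, Real.log |z| ∂(gaussianReal 0 1) with ha
  have ha' : a = ∫ x, Real.log |x| ∂μ0 := rfl
  have haem : ∀ i, AEMeasurable (Z i) (ℙ : Measure Ω) := by
    intro i
    by_contra hc
    have h0 := hmap i
    rw [Measure.map_of_not_aemeasurable hc] at h0
    have h1 : (0 : Measure ℝ) Set.univ = (gaussianReal 0 1) Set.univ := by rw [h0]
    simp [measure_univ] at h1
  obtain ⟨W, hWm, hWae⟩ : ∃ W : Fin n → Ω → ℝ, (∀ i, Measurable (W i)) ∧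
      (∀ i, Z i =ᵐ[(ℙ : Measure Ω)] W i) :=
    ⟨fun i => (haem i).mk (Z i), fun i => (haem i).measurable_mk, fun i => (haem i).ae_eq_mk⟩
  have hWmap : ∀ i, (ℙ : Measure Ω).map (W i) = gaussianReal 0 1 := fun i => by
    rw [← Measure.map_congr (hWae i)]; exact hmap i
  have hWindep := iIndepFun_ae_congr hindep hWae
  obtain ⟨X, hXdef⟩ : ∃ X : Fin n → Ω → ℝ, X = fun i ω => θ i * (Real.log |W i ω| - a) :=
    ⟨_, rfl⟩
  have hXm : ∀ i, Measurable (X i) := by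
    intro i
    rw [hXdef]
    exact (((Real.measurable_log.comp measurable_abs).comp (hWm i)).sub
      measurable_const).const_mul _
  have hXindep : iIndepFun X ℙ := by
    rw [hXdef]
    exact hWindep.comp (fun i (x:ℝ) => θ i * (Real.log |x| - a))
      (fun i => ((Real.measurable_log.comp measurable_abs).sub measurable_const).const_mul _)
  set M : ℝ := ⨆ i, |θ i| with hM
  have hn : n ≠ 0 := by rintro rfl; simp at hθ
  haveI : Nonempty (Fin n) := ⟨⟨0, Nat.pos_of_ne_zero hn⟩⟩
  have hMle : ∀ i, |θ i| ≤ M := by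
    intro i
    rw [hM]
    exact le_ciSup (f := fun j => |θ j|) (Set.Finite.bddAbove (Set.finite_range _)) i
  have hMpos : 0 < M := by
    by_contra hc
    push_neg at hc
    have hz : ∀ i, θ i = 0 := fun i =>
      abs_eq_zero.mp (le_antisymm ((hMle i).trans hc) (abs_nonneg _))
    rw [Finset.sum_eq_zero (fun i _ => by rw [hz i]; ring)] at hθ
    norm_num at hθ
  set lam : ℝ := min (1/(2*M)) (t/(2*K)) with hlam
  have hlampos : 0 < lam := lt_min (by positivity) (by positivity)
  have hsmall : ∀ i, lam * |θ i| ≤ 1/2 := by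
    intro i
    calc lam * |θ i| ≤ (1/(2*M)) * M :=
          mul_le_mul (min_le_left _ _) (hMle i) (abs_nonneg _) (by positivity)
      _ = 1/2 := by field_simp
  have hcs : ∀ (c : ℝ), |c| ≤ lam → ∀ i, |c * θ i| ≤ 1/2 := by
    intro c hc i
    rw [abs_mul]
    calc |c| * |θ i| ≤ lam * |θ i| :=
          mul_le_mul_of_nonneg_right hc (abs_nonneg _)
      _ ≤ 1/2 := hsmall i
  have hint_i : ∀ (c : ℝ), |c| ≤ lam → ∀ i,
      Integrable (fun ω => Real.exp (c * X i ω)) (ℙ : Measure Ω) := by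
    intro c hc i
    have hμint : Integrable (fun z : ℝ => Real.exp ((c * θ i) * (Real.log |z| - a))) μ0 :=
      int_shift ((hcs c hc i).trans (by norm_num)) a
    have hμint' : Integrable (fun z : ℝ => Real.exp ((c * θ i) * (Real.log |z| - a)))
        ((ℙ : Measure Ω).map (W i)) := by rw [hWmap i]; exact hμint
    have hmeas : AEStronglyMeasurable (fun z : ℝ => Real.exp ((c * θ i) * (Real.log |z| - a)))
        ((ℙ : Measure Ω).map (W i)) :=
      (((Real.measurable_log.comp measurable_abs).sub measurable_const).const_mul
        _).exp.aestronglyMeasurable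
    have hcomp := (integrable_map_measure hmeas (hWm i).aemeasurable).mp hμint'
    refine hcomp.congr (Filter.Eventually.of_forall fun ω => ?_)
    show Real.exp ((c * θ i) * (Real.log |W i ω| - a)) = Real.exp (c * X i ω)
    simp only [hXdef]
    congr 1
    ring
  have hmgf_i : ∀ (c : ℝ), |c| ≤ lam → ∀ i,
      mgf (X i) (ℙ : Measure Ω) c ≤ Real.exp (K * c^2 * θ i^2) := by
    intro c hc i
    have heq1 : mgf (X i) (ℙ : Measure Ω) c
        = ∫ ω, Real.exp ((c * θ i) * (Real.log |W i ω| - a)) ∂(ℙ : Measure Ω) := by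
      rw [mgf, hXdef]
      exact integral_congr_ae (Filter.Eventually.of_forall fun ω => by
        dsimp only
        congr 1
        ring)
    have hmeas : AEStronglyMeasurable (fun z : ℝ => Real.exp ((c * θ i) * (Real.log |z| - a)))
        ((ℙ : Measure Ω).map (W i)) :=
      (((Real.measurable_log.comp measurable_abs).sub measurable_const).const_mul
        _).exp.aestronglyMeasurable
    have heq2 : ∫ z, Real.exp ((c * θ i) * (Real.log |z| - a)) ∂((ℙ : Measure Ω).map (W i))
        = ∫ ω, Real.exp ((c * θ i) * (Real.log |W i ω| - a)) ∂(ℙ : Measure Ω) :=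
      integral_map (hWm i).aemeasurable hmeas
    have hbound := hKmgf (c * θ i) (hcs c hc i)
    rw [← ha'] at hbound
    rw [heq1, ← heq2, hWmap i]
    calc ∫ z, Real.exp ((c * θ i) * (Real.log |z| - a)) ∂μ0
        ≤ Real.exp (K * (c * θ i)^2) := hbound
      _ = Real.exp (K * c^2 * θ i^2) := by rw [mul_pow]; ring_nf
  have hmgf_S : ∀ (c : ℝ), |c| ≤ lam →
      mgf (∑ i, X i) (ℙ : Measure Ω) c ≤ Real.exp (K * c^2) := by
    intro c hc
    rw [iIndepFun.mgf_sum hXindep hXm Finset.univ]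
    calc ∏ i, mgf (X i) (ℙ : Measure Ω) c
        ≤ ∏ i, Real.exp (K * c^2 * θ i^2) :=
          Finset.prod_le_prod (fun i _ => mgf_nonneg) (fun i _ => hmgf_i c hc i)
      _ = Real.exp (∑ i, K * c^2 * θ i^2) := by rw [Real.exp_sum]
      _ = Real.exp (K * c^2) := by rw [← Finset.mul_sum, hθ, mul_one]
  have hint_S : ∀ (c : ℝ), |c| ≤ lam →
      Integrable (fun ω => Real.exp (c * (∑ i, X i) ω)) (ℙ : Measure Ω) :=
    fun c hc => iIndepFun.integrable_exp_mul_sum hXindep hXm (fun i _ => hint_i c hc i)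
  have hlamabs : |lam| ≤ lam := by rw [abs_of_pos hlampos]
  have hlamabs' : |(-lam)| ≤ lam := by rw [abs_neg, abs_of_pos hlampos]
  have hup : (ℙ {ω | t ≤ (∑ i, X i) ω}).toReal ≤ Real.exp (-(lam*t) + K*lam^2) := by
    have h := measure_ge_le_exp_mul_mgf (X := ∑ i, X i) (μ := (ℙ : Measure Ω)) (t := lam)
      t hlampos.le (hint_S lam hlamabs)
    calc (ℙ {ω | t ≤ (∑ i, X i) ω}).toReal
        ≤ Real.exp (-lam * t) * mgf (∑ i, X i) (ℙ : Measure Ω) lam := h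
      _ ≤ Real.exp (-lam * t) * Real.exp (K * lam^2) :=
          mul_le_mul_of_nonneg_left (hmgf_S lam hlamabs) (Real.exp_pos _).le
      _ = Real.exp (-(lam*t) + K*lam^2) := by rw [← Real.exp_add]; ring_nf
  have hlow : (ℙ {ω | (∑ i, X i) ω ≤ -t}).toReal ≤ Real.exp (-(lam*t) + K*lam^2) := by
    have h := measure_le_le_exp_mul_mgf (X := ∑ i, X i) (μ := (ℙ : Measure Ω)) (t := -lam)
      (-t) (neg_nonpos.mpr hlampos.le) (hint_S (-lam) hlamabs')
    calc (ℙ {ω | (∑ i, X i) ω ≤ -t}).toReal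
        ≤ Real.exp (-(-lam) * (-t)) * mgf (∑ i, X i) (ℙ : Measure Ω) (-lam) := h
      _ ≤ Real.exp (-(-lam) * (-t)) * Real.exp (K * (-lam)^2) :=
          mul_le_mul_of_nonneg_left (hmgf_S (-lam) hlamabs') (Real.exp_pos _).le
      _ = Real.exp (-(lam*t) + K*lam^2) := by rw [← Real.exp_add]; ring_nf
  have hexp1 : -(lam*t) + K*lam^2 ≤ -(lam*t/2) := by
    have hKl : K * lam ≤ t/2 := by
      calc K * lam ≤ K * (t/(2*K)) :=
            mul_le_mul_of_nonneg_left (min_le_right _ _) hK0.le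
        _ = t/2 := by field_simp
    nlinarith [hlampos]
  have hexp2 : (1/(4*K)) * min (t/M) (t^2) ≤ lam*t/2 := by
    have e0 : lam * t = min ((1/(2*M))*t) ((t/(2*K))*t) := by
      rw [hlam]; exact min_mul_of_nonneg _ _ ht.le
    have e1 : (1/(2*K))*(t/M) ≤ (1/(2*M))*t := by
      have h1 : (1/(2*K))*(t/M) = t/(2*K*M) := by field_simp
      have h2 : (1/(2*M))*t = t/(2*M) := by ring
      rw [h1, h2, div_le_div_iff₀ (by positivity) (by positivity)]
      nlinarith [mul_nonneg (mul_nonneg ht.le hMpos.le) (sub_nonneg.mpr hK1)]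
    have e2 : (1/(2*K))*t^2 = (t/(2*K))*t := by ring
    have e3 : (1/(2*K)) * min (t/M) (t^2) = min ((1/(2*K))*(t/M)) ((1/(2*K))*t^2) :=
      mul_min_of_nonneg _ _ (by positivity)
    have e4 : (1/(2*K)) * min (t/M) (t^2) ≤ lam * t := by
      rw [e3, e0]; exact min_le_min e1 (le_of_eq e2)
    have e5 : (1/(4*K)) * min (t/M) (t^2) = ((1/(2*K)) * min (t/M) (t^2))/2 := by ring
    linarith
  have hsum_ae : ∀ᵐ ω ∂(ℙ : Measure Ω),
      (∑ i, θ i * Real.log |Z i ω|) - a * ∑ i, θ i = (∑ i, X i) ω := by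
    filter_upwards [ae_all_iff.2 hWae] with ω hω
    rw [Finset.sum_apply]
    simp only [hXdef]
    have h1 : (∑ i, θ i * Real.log |Z i ω|) = ∑ i, θ i * Real.log |W i ω| :=
      Finset.sum_congr rfl fun i _ => by rw [hω i]
    rw [h1, Finset.mul_sum, ← Finset.sum_sub_distrib]
    exact Finset.sum_congr rfl fun i _ => by ring
  have hmeaseq : ℙ {ω | t ≤ |(∑ i, θ i * Real.log |Z i ω|) - a * ∑ i, θ i|}
      = ℙ {ω | t ≤ |(∑ i, X i) ω|} := by
    apply measure_congr
    rw [Filter.eventuallyEq_set]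
    filter_upwards [hsum_ae] with ω hω
    simp only [Set.mem_setOf_eq, hω]
  have hsub : {ω | t ≤ |(∑ i, X i) ω|} ⊆ {ω | t ≤ (∑ i, X i) ω} ∪ {ω | (∑ i, X i) ω ≤ -t} := by
    intro ω hω
    have hω' : t ≤ |(∑ i, X i) ω| := hω
    rcases le_abs.mp hω' with h | h
    · exact Or.inl h
    · exact Or.inr (show (∑ i, X i) ω ≤ -t by linarith)
  calc (ℙ {ω | t ≤ |(∑ i, θ i * Real.log |Z i ω|) - a * ∑ i, θ i|}).toReal
      = (ℙ {ω | t ≤ |(∑ i, X i) ω|}).toReal := by rw [hmeaseq]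
    _ ≤ ((ℙ {ω | t ≤ (∑ i, X i) ω}) + ℙ {ω | (∑ i, X i) ω ≤ -t}).toReal := by
        apply ENNReal.toReal_mono
        · exact ENNReal.add_ne_top.mpr ⟨measure_ne_top _ _, measure_ne_top _ _⟩
        · exact (measure_mono hsub).trans (measure_union_le _ _)
    _ = (ℙ {ω | t ≤ (∑ i, X i) ω}).toReal + (ℙ {ω | (∑ i, X i) ω ≤ -t}).toReal :=
        ENNReal.toReal_add (measure_ne_top _ _) (measure_ne_top _ _)
    _ ≤ Real.exp (-(lam*t) + K*lam^2) + Real.exp (-(lam*t) + K*lam^2) := add_le_add hup hlow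
    _ = 2 * Real.exp (-(lam*t) + K*lam^2) := by ring
    _ ≤ 2 * Real.exp (-(1/(4*K) * min (t/M) (t^2))) := by
        apply mul_le_mul_of_nonneg_left _ (by norm_num)
        apply Real.exp_le_exp.2
        linarith
end

section
/- Let Z be a standard real Gaussian and X := max{|Z|, |Z|^{-1}}. Then E[ log log(eX) ] ≤ sqrt(8/π). -/
open MeasureTheory ProbabilityTheory Real Set
open scoped NNReal ENNReal


/-- Integrability of an even reflection. -/
lemma my_integrable_comp_abs {f : ℝ → ℝ} (hf : IntegrableOn f (Ioi 0)) :
    Integrable (fun x => f |x|) := by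
  have hf' : IntegrableOn (fun x => f |x|) (Ioi 0) := by
    refine hf.congr_fun (fun x hx => ?_) measurableSet_Ioi
    rw [abs_of_pos hx]
  have int_Iic : IntegrableOn (fun x ↦ f |x|) (Iic 0) := by
    rw [← Measure.map_neg_eq_self (volume : Measure ℝ)]
    have m : MeasurableEmbedding fun x : ℝ => -x := (Homeomorph.neg ℝ).measurableEmbedding
    rw [m.integrableOn_map_iff]
    simp_rw [Function.comp_def, abs_neg, neg_preimage, neg_Iic, neg_zero]
    exact (integrableOn_Ici_iff_integrableOn_Ioi).mpr hf'
  have := int_Iic.union hf'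
  rwa [Iic_union_Ioi, integrableOn_univ] at this

/-- the key improper integral : ∫_(0,1] (-log) = 1 and integrability. -/
lemma my_integrableOn_neg_log : IntegrableOn (fun x : ℝ => -Real.log x) (Ioc 0 1) := by
  refine intervalIntegral.integrableOn_deriv_of_nonneg
    (g := fun x => x - x * Real.log x) (continuous_id.sub Real.continuous_mul_log).continuousOn
    (fun x hx => ?_) (fun x hx => ?_)
  · have h1 : HasDerivAt (fun x : ℝ => x * Real.log x) (Real.log x + 1) x :=
      Real.hasDerivAt_mul_log hx.1.ne'
    have := (hasDerivAt_id x).sub h1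
    convert this using 1; rfl; rfl; rfl; ring
  · simp only [Left.nonneg_neg_iff]
    exact Real.log_nonpos hx.1.le hx.2.le

lemma my_integral_neg_log : ∫ x in Ioc (0:ℝ) 1, -Real.log x = 1 := by
  have h := intervalIntegral.integral_eq_sub_of_hasDerivAt_of_tendsto
    (f := fun x => x - x * Real.log x) (f' := fun x => -Real.log x) (a := (0:ℝ)) (b := 1)
    one_pos (fa := 0) (fb := 1)
    (fun x hx => by
      have h1 : HasDerivAt (fun x : ℝ => x * Real.log x) (Real.log x + 1) x :=
        Real.hasDerivAt_mul_log hx.1.ne'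
      have := (hasDerivAt_id x).sub h1
      convert this using 1; rfl; ring)
    ((intervalIntegrable_iff_integrableOn_Ioc_of_le zero_le_one).mpr my_integrableOn_neg_log)
    (by
      have hc : Continuous fun x : ℝ => x - x * Real.log x :=
        continuous_id.sub Real.continuous_mul_log
      have := (hc.tendsto 0).mono_left (nhdsWithin_le_nhds (s := Ioi 0))
      simpa using this)
    (by
      have hc : Continuous fun x : ℝ => x - x * Real.log x :=
        continuous_id.sub Real.continuous_mul_log
      have := (hc.tendsto 1).mono_left (nhdsWithin_le_nhds (s := Iio 1))
      simpa using this)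
  rw [intervalIntegral.integral_of_le zero_le_one] at h
  simpa using h

/-- half-gaussian first moment -/
lemma my_integral_Ioi_mul_exp : ∫ x in Ioi (0:ℝ), x * Real.exp (-(1/2) * x ^ 2) = 1 := by
  have h := integral_Ioi_of_hasDerivAt_of_tendsto' (a := (0:ℝ)) (m := 0)
    (f := fun x => -Real.exp (-(1/2) * x ^ 2))
    (f' := fun x => x * Real.exp (-(1/2) * x ^ 2))
    (fun x _ => by
      have h1 : HasDerivAt (fun x : ℝ => -(1/2) * x ^ 2) (-(1/2) * (2 * x ^ 1)) x :=
        (hasDerivAt_pow 2 x).const_mul (-(1/2))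
      have := (h1.exp).neg
      convert this using 1; rfl; ring)
    ((integrable_mul_exp_neg_mul_sq (by norm_num : (0:ℝ) < 1/2)).integrableOn.congr_fun
      (fun x _ => by ring_nf) measurableSet_Ioi)
    (by
      have h2 : Filter.Tendsto (fun x : ℝ => -(1/2) * x ^ 2) Filter.atTop Filter.atBot := by
        apply Filter.Tendsto.const_mul_atTop_of_neg (by norm_num)
        exact Filter.tendsto_pow_atTop (by norm_num)
      have := (Real.tendsto_exp_atBot.comp h2).neg
      simpa using this)
  simpa using h


noncomputable def Qf (x : ℝ) : ℝ := max (-Real.log |x|) 0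

lemma Qf_nonneg (x : ℝ) : 0 ≤ Qf x := le_max_right _ _

/-- pointwise bound -/
lemma my_pointwise (z : ℝ) :
    Real.log (Real.log (Real.exp 1 * max |z| |z|⁻¹)) ≤ Qf z + |z| := by
  rcases eq_or_ne z 0 with rfl | hz
  · simp [Qf]
  · have ht : 0 < |z| := abs_pos.mpr hz
    set t := |z| with htdef
    have hM : 1 ≤ max t t⁻¹ := by
      rcases le_total 1 t with h | h
      · exact h.trans (le_max_left _ _)
      · exact (one_le_inv_iff₀.mpr ⟨ht, h⟩).trans (le_max_right _ _)
    have hlogM : Real.log (max t t⁻¹) = |Real.log t| := by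
      rcases le_total 1 t with h | h
      · rw [max_eq_left ((inv_le_one_of_one_le₀ h).trans h), abs_of_nonneg (Real.log_nonneg h)]
      · rw [max_eq_right (le_trans h (one_le_inv_iff₀.mpr ⟨ht, h⟩)), Real.log_inv,
          abs_of_nonpos (Real.log_nonpos ht.le h)]
    have hMne : max t t⁻¹ ≠ 0 := by positivity
    have h1 : Real.log (Real.exp 1 * max t t⁻¹) = 1 + |Real.log t| := by
      rw [Real.log_mul (Real.exp_ne_zero 1) hMne, Real.log_exp, hlogM]
    rw [h1]
    have h2 : Real.log (1 + |Real.log t|) ≤ |Real.log t| := by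
      have := Real.log_le_sub_one_of_pos (x := 1 + |Real.log t|)
        (by positivity)
      linarith
    refine h2.trans ?_
    rcases le_total 1 t with h | h
    · have : |Real.log t| = Real.log t := abs_of_nonneg (Real.log_nonneg h)
      rw [this]
      have h3 : Real.log t ≤ t - 1 := Real.log_le_sub_one_of_pos ht
      have h4 : 0 ≤ Qf z := Qf_nonneg z
      linarith
    · have : |Real.log t| = -Real.log t := abs_of_nonpos (Real.log_nonpos ht.le h)
      rw [this]
      have h4 : Qf z = -Real.log t := by
        rw [Qf, ← htdef, max_eq_left]
        simp only [Left.nonneg_neg_iff]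
        exact Real.log_nonpos ht.le h
      rw [h4]; nlinarith [ht.le]

lemma my_pointwise_nonneg (z : ℝ) :
    0 ≤ Real.log (Real.log (Real.exp 1 * max |z| |z|⁻¹)) := by
  rcases eq_or_ne z 0 with rfl | hz
  · simp
  · have ht : 0 < |z| := abs_pos.mpr hz
    have hM : 1 ≤ max |z| |z|⁻¹ := by
      rcases le_total 1 |z| with h | h
      · exact h.trans (le_max_left _ _)
      · exact (one_le_inv_iff₀.mpr ⟨ht, h⟩).trans (le_max_right _ _)
    apply Real.log_nonneg
    have : Real.exp 1 * 1 ≤ Real.exp 1 * max |z| |z|⁻¹ := by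
      apply mul_le_mul_of_nonneg_left hM (Real.exp_pos 1).le
    calc (1:ℝ) = Real.log (Real.exp 1) := (Real.log_exp 1).symm
    _ ≤ _ := Real.log_le_log (by positivity) (by linarith)


lemma Qf_Ioc {x : ℝ} (hx : x ∈ Ioc (0:ℝ) 1) : Qf x = -Real.log x := by
  rw [Qf, abs_of_pos hx.1, max_eq_left]
  simp only [Left.nonneg_neg_iff]
  exact Real.log_nonpos hx.1.le hx.2

lemma Qf_Ioi {x : ℝ} (hx : x ∈ Ioi (1:ℝ)) : Qf x = 0 := by
  rw [Qf, abs_of_pos (lt_trans one_pos hx), max_eq_right]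
  simp only [Left.neg_nonpos_iff]
  exact Real.log_nonneg (le_of_lt hx)



lemma hQIoc : IntegrableOn Qf (Ioc 0 1) :=
  my_integrableOn_neg_log.congr_fun (fun x hx => (Qf_Ioc hx).symm) measurableSet_Ioc

lemma hQIoi1 : IntegrableOn Qf (Ioi 1) :=
  (integrableOn_zero).congr_fun (fun x hx => (Qf_Ioi hx).symm) measurableSet_Ioi

lemma hQIoi : IntegrableOn Qf (Ioi 0) := by
  rw [← Ioc_union_Ioi_eq_Ioi (zero_le_one (α := ℝ))]
  exact hQIoc.union hQIoi1

lemma hQint : Integrable Qf := by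
  have := my_integrable_comp_abs hQIoi
  have h : (fun x : ℝ => Qf |x|) = Qf := by funext x; rw [Qf, Qf, abs_abs]
  rwa [h] at this

lemma hQval : ∫ x, Qf x = 2 := by
  have h : (fun x : ℝ => Qf x) = fun x => Qf |x| := by funext x; rw [Qf, Qf, abs_abs]
  rw [show (∫ x, Qf x) = ∫ x, Qf |x| by rw [← h], integral_comp_abs]
  rw [← Ioc_union_Ioi_eq_Ioi (zero_le_one (α := ℝ)),
    setIntegral_union (Ioc_disjoint_Ioi le_rfl) measurableSet_Ioi hQIoc hQIoi1]
  rw [setIntegral_congr_fun measurableSet_Ioc (fun x hx => Qf_Ioc hx), my_integral_neg_log]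
  rw [setIntegral_congr_fun measurableSet_Ioi (fun x hx => Qf_Ioi hx)]
  simp

/-- For `Z` standard Gaussian and `X := max{|Z|, |Z|⁻¹}`,
`E[log log(eX)] ≤ √(8/π)`. -/
theorem loglog_expectation_bound :
    (∫ z, Real.log (Real.log (Real.exp 1 * max |z| |z|⁻¹)) ∂(gaussianReal 0 1))
      ≤ Real.sqrt (8 / π) := by
  set c : ℝ := (Real.sqrt (2 * π))⁻¹ with hc
  set φ : ℝ → ℝ := fun x => c * rexp (-(1/2) * x ^ 2) with hφ
  have hcnn : 0 ≤ c := by positivity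
  have hφnn : ∀ x, 0 ≤ φ x := fun x => by positivity
  have hφle : ∀ x, φ x ≤ c := by
    intro x
    have h := Real.exp_le_exp.mpr (show -(1/2) * x^2 ≤ 0 by nlinarith [sq_nonneg x])
    rw [Real.exp_zero] at h
    calc φ x = c * rexp (-(1/2) * x^2) := rfl
    _ ≤ c * 1 := by exact mul_le_mul_of_nonneg_left h hcnn
    _ = c := mul_one c
  have hφcont : Continuous φ := by
    apply continuous_const.mul
    exact Real.continuous_exp.comp (by continuity)
  have hφeq : gaussianPDFReal 0 1 = φ := by
    funext x
    rw [gaussianPDFReal]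
    rw [show (2 * π * ((1:ℝ≥0):ℝ)) = 2 * π by push_cast; ring,
      show -(x - 0)^2 / (2 * ((1:ℝ≥0):ℝ)) = -(1/2) * x^2 by push_cast; ring]
  -- integrability facts on volume
  have intAbs : Integrable (fun x => φ x * |x|) := by
    have h := (integrable_mul_exp_neg_mul_sq (show (0:ℝ) < 1/2 by norm_num)).abs
    have h2 : (fun x => φ x * |x|) = fun x => c * |x * rexp (-(1/2) * x^2)| := by
      funext x; rw [abs_mul, abs_of_pos (Real.exp_pos _)]; ring
    rw [h2]
    exact h.const_mul c
  have intQphi : Integrable (fun x => φ x * Qf x) := by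
    refine hQint.bdd_mul (c := c) hφcont.aestronglyMeasurable (ae_of_all _ fun x => ?_)
    rw [Real.norm_eq_abs, abs_of_nonneg (hφnn x)]; exact hφle x
  have hgvol : Integrable (fun x => φ x * (Qf x + |x|)) := by
    refine (intQphi.add intAbs).congr (ae_of_all _ fun x => ?_)
    simp only [Pi.add_apply]; ring
  -- the measure
  rw [gaussianReal_of_var_ne_zero 0 one_ne_zero]
  have hpdf : gaussianPDF 0 1 = fun x => ((φ x).toNNReal : ℝ≥0∞) := by
    funext x; rw [gaussianPDF, hφeq]; simp [ENNReal.ofReal]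
  rw [hpdf]
  have hmeas : Measurable fun x => (φ x).toNNReal := hφcont.measurable.real_toNNReal
  have hsmul1 : (fun x => (φ x).toNNReal • (Qf x + |x|)) = fun x => φ x * (Qf x + |x|) :=
    funext fun x => by rw [NNReal.smul_def, Real.coe_toNNReal _ (hφnn x), smul_eq_mul]
  have hgμ : Integrable (fun z => Qf z + |z|) (volume.withDensity fun x => ((φ x).toNNReal : ℝ≥0∞)) := by
    rw [integrable_withDensity_iff_integrable_smul hmeas]
    exact hsmul1 ▸ hgvol
  have hmono := integral_mono_of_nonneg (ae_of_all _ my_pointwise_nonneg) hgμ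
    (ae_of_all _ my_pointwise)
  refine hmono.trans ?_
  rw [integral_withDensity_eq_integral_smul hmeas]
  rw [show (fun x => (φ x).toNNReal • (Qf x + |x|)) = fun x => φ x * (Qf x + |x|) from hsmul1]
  rw [show (fun x => φ x * (Qf x + |x|)) = fun x => φ x * Qf x + φ x * |x| from
    funext fun x => by ring, integral_add intQphi intAbs]
  have bound1 : ∫ x, φ x * Qf x ≤ c * 2 := by
    have hcq : Integrable (fun x => c * Qf x) := hQint.const_mul c
    have h := integral_mono intQphi hcq
      (fun x => mul_le_mul_of_nonneg_right (hφle x) (Qf_nonneg x))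
    rwa [integral_const_mul, hQval] at h
  have val2 : ∫ x, φ x * |x| = c * 2 := by
    have h : (fun x => φ x * |x|) = fun x => (fun t => c * (t * rexp (-(1/2) * t^2))) |x| := by
      funext x; simp only; rw [sq_abs]; ring
    rw [h, integral_comp_abs (f := fun t => c * (t * rexp (-(1/2) * t^2))),
      integral_const_mul, my_integral_Ioi_mul_exp]
    ring
  have h8 : Real.sqrt (8 / π) = 4 * c := by
    have hs : Real.sqrt (2*π) ^ 2 = 2*π := Real.sq_sqrt (by positivity)
    have hsp : 0 < Real.sqrt (2*π) := Real.sqrt_pos.mpr (by positivity)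
    rw [show (8:ℝ)/π = (4 * c)^2 by
      rw [mul_pow, hc, inv_pow, hs]
      field_simp
      ring]
    exact Real.sqrt_sq (by positivity)
  rw [h8, val2]
  linarith [bound1]
end

section
/- Let d ≥ e² be a real number, Z a standard real Gaussian, and X := max{|Z|, |Z|^{-1}}. Then log log d ≤ E[ log log(dX) ] ≤ log 2 + log log(d/e) + sqrt(8/π). -/
open MeasureTheory ProbabilityTheory Real Set
open scoped ENNReal NNReal


lemma logOneAdd_le {u : ℝ} (hu : 0 ≤ u) : Real.log (1+u) ≤ 0.6 + 0.3 * Real.exp (u/2) := by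
  have h0 : (0:ℝ) < 1 + u := by linarith
  have he : (0:ℝ) < Real.exp 1 := Real.exp_pos 1
  have h1 : Real.log (1+u) * Real.exp 1 ≤ 1 + u := by
    have h := Real.log_le_sub_one_of_pos (show (0:ℝ) < (1+u)/Real.exp 1 by positivity)
    rw [Real.log_div (ne_of_gt h0) (Real.exp_ne_zero 1), Real.log_exp, div_eq_mul_inv] at h
    have h5 := mul_le_mul_of_nonneg_right (show Real.log (1+u) ≤ (1+u) * (Real.exp 1)⁻¹ by linarith) he.le
    rwa [mul_assoc, inv_mul_cancel₀ (Real.exp_ne_zero 1), mul_one] at h5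
  have h2 : (1 + u/6)^3 ≤ Real.exp (u/2) := by
    have h := Real.add_one_le_exp (u/6)
    calc (1 + u/6)^3 ≤ (Real.exp (u/6))^3 := by
          apply pow_le_pow_left₀ (by linarith) (by linarith)
        _ = Real.exp (u/2) := by
          rw [← Real.exp_nat_mul]; congr 1; ring
  have h3 : (2.7182818283:ℝ) < Real.exp 1 := Real.exp_one_gt_d9
  have hl : 0 ≤ Real.log (1+u) := Real.log_nonneg (by linarith)
  have h4 : Real.log (1+u) * 2.7182818283 ≤ 1 + u := by nlinarith
  nlinarith [h2, sq_nonneg (u - 4.357), mul_nonneg (mul_nonneg hu hu) hu]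

lemma exp_abs_log_half_le {t : ℝ} (ht : 0 < t) :
    Real.exp (|Real.log t|/2) ≤ Real.sqrt t + (Real.sqrt t)⁻¹ := by
  have hs : 0 < Real.sqrt t := Real.sqrt_pos.mpr ht
  have h1 : Real.exp (Real.log t / 2) = Real.sqrt t := by
    rw [← Real.log_sqrt ht.le, Real.exp_log hs]
  have h2 : Real.exp (-(Real.log t) / 2) = (Real.sqrt t)⁻¹ := by
    rw [neg_div, Real.exp_neg, h1]
  rcases abs_cases (Real.log t) with ⟨h, _⟩ | ⟨h, _⟩ <;> rw [h]
  · rw [h1]; nlinarith [inv_pos.mpr hs]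
  · rw [h2]; nlinarith


lemma integrableOn_exp_neg_Ioi' : IntegrableOn (fun x : ℝ => Real.exp (-x)) (Ioi 0) := by
  have h := Real.GammaIntegral_convergent (show (0:ℝ) < 1 by norm_num)
  simpa using h

lemma integral_exp_neg_Ioi_eq : ∫ x in Ioi (0:ℝ), Real.exp (-x) = 1 := by
  have h := Real.Gamma_eq_integral (show (0:ℝ) < 1 by norm_num)
  rw [Real.Gamma_one] at h
  simp only [show (1:ℝ)-1 = 0 by norm_num, Real.rpow_zero, mul_one] at h
  exact h.symm

lemma integrableOn_exp_neg_mul_Ioi : IntegrableOn (fun x : ℝ => Real.exp (-x) * x) (Ioi 0) := by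
  have h := Real.GammaIntegral_convergent (show (0:ℝ) < 2 by norm_num)
  simp only [show (2:ℝ)-1 = 1 by norm_num, Real.rpow_one] at h
  exact h

lemma integral_exp_neg_mul_Ioi_eq : ∫ x in Ioi (0:ℝ), Real.exp (-x) * x = 1 := by
  have h := Real.Gamma_eq_integral (show (0:ℝ) < 2 by norm_num)
  have h2 : Real.Gamma 2 = 1 := by
    rw [show (2:ℝ) = 1 + 1 by norm_num, Real.Gamma_add_one one_ne_zero, Real.Gamma_one, one_mul]
  rw [h2] at h
  simp only [show (2:ℝ)-1 = 1 by norm_num, Real.rpow_one] at h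
  exact h.symm

lemma Gamma_five_quarters_le : Real.Gamma (5/4) ≤ 1 := by
  rw [Real.Gamma_eq_integral (by norm_num : (0:ℝ) < 5/4)]
  have hle : ∀ x ∈ Ioi (0:ℝ), Real.exp (-x) * x ^ ((5:ℝ)/4 - 1) ≤ Real.exp (-x) * ((3 + x)/4) := by
    intro x hx
    have hx0 : (0:ℝ) < x := hx
    have hy : (0:ℝ) ≤ x ^ ((1:ℝ)/4) := Real.rpow_nonneg hx0.le _
    have hy4 : (x ^ ((1:ℝ)/4))^4 = x := by
      rw [← Real.rpow_natCast (x ^ ((1:ℝ)/4)) 4, ← Real.rpow_mul hx0.le]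
      norm_num
    have : x ^ ((5:ℝ)/4 - 1) ≤ (3 + x)/4 := by
      rw [show (5:ℝ)/4 - 1 = 1/4 by norm_num]
      nlinarith [sq_nonneg (x ^ ((1:ℝ)/4) - 1), sq_nonneg (x ^ ((1:ℝ)/4) + 1), sq_nonneg (x ^ ((1:ℝ)/4))]
    exact mul_le_mul_of_nonneg_left this (Real.exp_pos _).le
  have hint : IntegrableOn (fun x : ℝ => Real.exp (-x) * ((3 + x)/4)) (Ioi 0) := by
    have : (fun x : ℝ => Real.exp (-x) * ((3 + x)/4))
        = fun x : ℝ => (3/4) * Real.exp (-x) + (1/4) * (Real.exp (-x) * x) := by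
      funext x; ring
    rw [this]
    exact (integrableOn_exp_neg_Ioi'.const_mul _).add (integrableOn_exp_neg_mul_Ioi.const_mul _)
  have := setIntegral_mono_on (Real.GammaIntegral_convergent (by norm_num : (0:ℝ) < 5/4)) hint measurableSet_Ioi hle
  refine this.trans ?_
  have : ∫ x in Ioi (0:ℝ), Real.exp (-x) * ((3 + x)/4)
      = (3/4) * (∫ x in Ioi (0:ℝ), Real.exp (-x)) + (1/4) * ∫ x in Ioi (0:ℝ), Real.exp (-x) * x := by
    rw [← integral_const_mul, ← integral_const_mul, ← integral_add ((integrableOn_exp_neg_Ioi').const_mul _) ((integrableOn_exp_neg_mul_Ioi).const_mul _)]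
    congr 1; funext x; ring
  rw [this, integral_exp_neg_Ioi_eq, integral_exp_neg_mul_Ioi_eq]
  norm_num

lemma Gamma_seven_quarters_le : Real.Gamma (7/4) ≤ 1 := by
  rw [Real.Gamma_eq_integral (by norm_num : (0:ℝ) < 7/4)]
  have hle : ∀ x ∈ Ioi (0:ℝ), Real.exp (-x) * x ^ ((7:ℝ)/4 - 1) ≤ Real.exp (-x) * ((1 + 3*x)/4) := by
    intro x hx
    have hx0 : (0:ℝ) < x := hx
    have hy : (0:ℝ) ≤ x ^ ((1:ℝ)/4) := Real.rpow_nonneg hx0.le _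
    have hy4 : (x ^ ((1:ℝ)/4))^4 = x := by
      rw [← Real.rpow_natCast (x ^ ((1:ℝ)/4)) 4, ← Real.rpow_mul hx0.le]
      norm_num
    have hy3 : (x ^ ((1:ℝ)/4))^3 = x ^ ((3:ℝ)/4) := by
      rw [← Real.rpow_natCast (x ^ ((1:ℝ)/4)) 3, ← Real.rpow_mul hx0.le]
      norm_num
    have : x ^ ((7:ℝ)/4 - 1) ≤ (1 + 3*x)/4 := by
      rw [show (7:ℝ)/4 - 1 = 3/4 by norm_num]
      nlinarith [hy3, hy4, sq_nonneg (x ^ ((1:ℝ)/4) - 1), sq_nonneg (x ^ ((1:ℝ)/4) + 1), sq_nonneg (x ^ ((1:ℝ)/4))]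
    exact mul_le_mul_of_nonneg_left this (Real.exp_pos _).le
  have hint : IntegrableOn (fun x : ℝ => Real.exp (-x) * ((1 + 3*x)/4)) (Ioi 0) := by
    have : (fun x : ℝ => Real.exp (-x) * ((1 + 3*x)/4))
        = fun x : ℝ => (1/4) * Real.exp (-x) + (3/4) * (Real.exp (-x) * x) := by
      funext x; ring
    rw [this]
    exact (integrableOn_exp_neg_Ioi'.const_mul _).add (integrableOn_exp_neg_mul_Ioi.const_mul _)
  have := setIntegral_mono_on (Real.GammaIntegral_convergent (by norm_num : (0:ℝ) < 7/4)) hint measurableSet_Ioi hle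
  refine this.trans ?_
  have : ∫ x in Ioi (0:ℝ), Real.exp (-x) * ((1 + 3*x)/4)
      = (1/4) * (∫ x in Ioi (0:ℝ), Real.exp (-x)) + (3/4) * ∫ x in Ioi (0:ℝ), Real.exp (-x) * x := by
    rw [← integral_const_mul, ← integral_const_mul, ← integral_add ((integrableOn_exp_neg_Ioi').const_mul _) ((integrableOn_exp_neg_mul_Ioi).const_mul _)]
    congr 1; funext x; ring
  rw [this, integral_exp_neg_Ioi_eq, integral_exp_neg_mul_Ioi_eq]
  norm_num

lemma Gamma_quarter_le : Real.Gamma (1/4) ≤ 4 := by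
  have h := Real.Gamma_add_one (show (1/4:ℝ) ≠ 0 by norm_num)
  rw [show (1/4:ℝ) + 1 = 5/4 by norm_num] at h
  nlinarith [Gamma_five_quarters_le, Real.Gamma_pos_of_pos (show (0:ℝ) < 1/4 by norm_num)]

lemma Gamma_three_quarter_le : Real.Gamma (3/4) ≤ 4/3 := by
  have h := Real.Gamma_add_one (show (3/4:ℝ) ≠ 0 by norm_num)
  rw [show (3/4:ℝ) + 1 = 7/4 by norm_num] at h
  nlinarith [Gamma_seven_quarters_le, Real.Gamma_pos_of_pos (show (0:ℝ) < 3/4 by norm_num)]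


lemma integrable_abs_rpow_gauss {s : ℝ} (hs : -1 < s) :
    Integrable (fun x : ℝ => |x| ^ s * Real.exp (-(1/2:ℝ) * x^2)) := by
  have hb : (0:ℝ) < 1/2 := by norm_num
  have hIoi : IntegrableOn (fun x : ℝ => |x| ^ s * Real.exp (-(1/2:ℝ) * x^2)) (Ioi 0) := by
    refine (integrableOn_rpow_mul_exp_neg_mul_sq hb hs).congr_fun (fun x hx => ?_) measurableSet_Ioi
    rw [abs_of_pos hx]
  have hIic : IntegrableOn (fun x : ℝ => |x| ^ s * Real.exp (-(1/2:ℝ) * x^2)) (Iic 0) := by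
    rw [← (Measure.measurePreserving_neg (volume : Measure ℝ)).integrableOn_comp_preimage
        (Homeomorph.neg ℝ).measurableEmbedding]
    simp only [Function.comp_def, abs_neg, neg_sq, neg_preimage, neg_Iic, neg_zero]
    exact Iff.mpr integrableOn_Ici_iff_integrableOn_Ioi hIoi
  rw [← integrableOn_univ, ← Iic_union_Ioi (a := (0:ℝ)), integrableOn_union]
  exact ⟨hIic, hIoi⟩

lemma integral_abs_rpow_gauss {s : ℝ} (hs : -1 < s) :
    ∫ x : ℝ, |x| ^ s * Real.exp (-(1/2:ℝ) * x^2)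
      = 2 * ((1/2:ℝ) ^ (-(s+1)/2) * (1/2) * Real.Gamma ((s+1)/2)) := by
  have h1 : (fun x : ℝ => |x| ^ s * Real.exp (-(1/2:ℝ) * x^2))
      = fun x : ℝ => (fun t : ℝ => t ^ s * Real.exp (-(1/2:ℝ) * t^2)) |x| := by
    funext x; simp [sq_abs]
  rw [h1, integral_comp_abs (f := fun t : ℝ => t ^ s * Real.exp (-(1/2:ℝ) * t^2))]
  congr 1
  have h2 : ∀ x ∈ Ioi (0:ℝ), x ^ s * Real.exp (-(1/2:ℝ) * x^2)
      = x ^ s * Real.exp (-(1/2:ℝ) * x ^ (2:ℝ)) := by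
    intro x hx
    rw [Real.rpow_two]
  rw [setIntegral_congr_fun measurableSet_Ioi h2,
    integral_rpow_mul_exp_neg_mul_rpow two_pos hs (by norm_num)]


lemma half_rpow_neg (y : ℝ) : (1/2:ℝ) ^ (-y) = (2:ℝ) ^ y := by
  rw [show (1/2:ℝ) = (2:ℝ)⁻¹ by norm_num, ← Real.rpow_neg_one,
    ← Real.rpow_mul (by norm_num : (0:ℝ) ≤ 2)]
  norm_num

lemma two_rpow_34_le : (2:ℝ) ^ ((3:ℝ)/4) ≤ 1.682 := by
  set x := (2:ℝ) ^ ((3:ℝ)/4) with hx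
  have hx0 : 0 ≤ x := Real.rpow_nonneg (by norm_num) _
  have hx4 : x ^ 4 = 8 := by
    rw [hx, ← Real.rpow_natCast ((2:ℝ) ^ ((3:ℝ)/4)) 4, ← Real.rpow_mul (by norm_num : (0:ℝ) ≤ 2)]
    norm_num
  nlinarith [sq_nonneg (x^2 - 2.8292), sq_nonneg (x - 1.682), sq_nonneg (x + 1.682), sq_nonneg x]

lemma two_rpow_14_le : (2:ℝ) ^ ((1:ℝ)/4) ≤ 1.1893 := by
  set x := (2:ℝ) ^ ((1:ℝ)/4) with hx
  have hx0 : 0 ≤ x := Real.rpow_nonneg (by norm_num) _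
  have hx4 : x ^ 4 = 2 := by
    rw [hx, ← Real.rpow_natCast ((2:ℝ) ^ ((1:ℝ)/4)) 4, ← Real.rpow_mul (by norm_num : (0:ℝ) ≤ 2)]
    norm_num
  nlinarith [sq_nonneg (x^2 - 1.4161), sq_nonneg (x - 1.1893), sq_nonneg (x + 1.1893), sq_nonneg x]

lemma sqrt_two_pi_ge : (2.5066:ℝ) ≤ Real.sqrt (2*π) := by
  rw [Real.le_sqrt' (by norm_num)]
  nlinarith [Real.pi_gt_d6]

lemma sqrt_eight_div_pi_ge : (1.44:ℝ) ≤ Real.sqrt (8/π) := by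
  rw [Real.le_sqrt' (by norm_num)]
  rw [le_div_iff₀ Real.pi_pos]
  nlinarith [Real.pi_lt_d2]


lemma gaussian_pdf_eq (x : ℝ) :
    gaussianPDFReal 0 1 x = (Real.sqrt (2*π))⁻¹ * Real.exp (-(1/2:ℝ) * x^2) := by
  simp only [gaussianPDFReal, NNReal.coe_one, mul_one, sub_zero]
  congr 1
  ring_nf

lemma gaussian_integral_eq (g : ℝ → ℝ) :
    ∫ z, g z ∂(gaussianReal 0 1) = ∫ x, gaussianPDFReal 0 1 x * g x := by
  rw [gaussianReal_of_var_ne_zero 0 one_ne_zero, gaussianPDF_def]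
  have h : (fun x => ENNReal.ofReal (gaussianPDFReal 0 1 x))
      = fun x => (((gaussianPDFReal 0 1 x).toNNReal : ℝ≥0) : ℝ≥0∞) := rfl
  rw [h, integral_withDensity_eq_integral_smul (measurable_gaussianPDFReal 0 1).real_toNNReal g]
  congr 1; funext x
  simp [NNReal.smul_def, Real.coe_toNNReal _ (gaussianPDFReal_nonneg 0 1 x)]

lemma gaussian_integrable_iff (g : ℝ → ℝ) :
    Integrable g (gaussianReal 0 1) ↔ Integrable (fun x => gaussianPDFReal 0 1 x * g x) := by
  rw [gaussianReal_of_var_ne_zero 0 one_ne_zero, gaussianPDF_def]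
  have h : (fun x => ENNReal.ofReal (gaussianPDFReal 0 1 x))
      = fun x => (((gaussianPDFReal 0 1 x).toNNReal : ℝ≥0) : ℝ≥0∞) := rfl
  rw [h, integrable_withDensity_iff_integrable_smul (measurable_gaussianPDFReal 0 1).real_toNNReal]
  apply integrable_congr
  filter_upwards with x
  simp [NNReal.smul_def, Real.coe_toNNReal _ (gaussianPDFReal_nonneg 0 1 x)]



lemma gauss_pdf_mul (s : ℝ) :
    (fun x : ℝ => gaussianPDFReal 0 1 x * |x| ^ s)
      = fun x => (Real.sqrt (2*π))⁻¹ * (|x| ^ s * Real.exp (-(1/2:ℝ) * x^2)) := by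
  funext x; rw [gaussian_pdf_eq]; ring

lemma integrable_abs_rpow_gaussianReal {s : ℝ} (hs : -1 < s) :
    Integrable (fun z : ℝ => |z| ^ s) (gaussianReal 0 1) := by
  rw [gaussian_integrable_iff, gauss_pdf_mul]
  exact (integrable_abs_rpow_gauss hs).const_mul _

lemma integral_abs_rpow_gaussianReal {s : ℝ} (hs : -1 < s) :
    ∫ z, |z| ^ s ∂(gaussianReal 0 1)
      = (Real.sqrt (2*π))⁻¹ * (2 * ((1/2:ℝ) ^ (-(s+1)/2) * (1/2) * Real.Gamma ((s+1)/2))) := by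
  rw [gaussian_integral_eq, gauss_pdf_mul, integral_const_mul, integral_abs_rpow_gauss hs]

lemma sqrt_two_pi_inv_le : (Real.sqrt (2*π))⁻¹ ≤ (2.5066:ℝ)⁻¹ :=
  inv_anti₀ (by norm_num) sqrt_two_pi_ge

lemma J1_le : ∫ z, |z| ^ ((1:ℝ)/2) ∂(gaussianReal 0 1) ≤ 0.895 := by
  rw [integral_abs_rpow_gaussianReal (by norm_num)]
  have h1 : ((1/2:ℝ)) ^ (-((1:ℝ)/2+1)/2) ≤ 1.682 := by
    rw [show (-((1:ℝ)/2+1)/2) = -((3:ℝ)/4) by norm_num, half_rpow_neg]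
    exact two_rpow_34_le
  have hg : Real.Gamma (((1:ℝ)/2+1)/2) ≤ 4/3 := by
    rw [show (((1:ℝ)/2+1)/2) = 3/4 by norm_num]; exact Gamma_three_quarter_le
  have hg0 : 0 < Real.Gamma (((1:ℝ)/2+1)/2) :=
    Real.Gamma_pos_of_pos (by norm_num)
  have ha0 : (0:ℝ) ≤ (1/2:ℝ) ^ (-((1:ℝ)/2+1)/2) := Real.rpow_nonneg (by norm_num) _
  calc (Real.sqrt (2*π))⁻¹ * (2 * ((1/2:ℝ) ^ (-((1:ℝ)/2+1)/2) * (1/2) * Real.Gamma (((1:ℝ)/2+1)/2)))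
      = (Real.sqrt (2*π))⁻¹ * ((1/2:ℝ) ^ (-((1:ℝ)/2+1)/2) * Real.Gamma (((1:ℝ)/2+1)/2)) := by ring
    _ ≤ (2.5066:ℝ)⁻¹ * (1.682 * (4/3)) := by
        apply mul_le_mul sqrt_two_pi_inv_le (mul_le_mul h1 hg hg0.le (by norm_num)) (by positivity) (by norm_num)
    _ ≤ 0.895 := by norm_num

lemma J2_le : ∫ z, |z| ^ (-(1:ℝ)/2) ∂(gaussianReal 0 1) ≤ 1.898 := by
  rw [integral_abs_rpow_gaussianReal (by norm_num)]
  have h1 : ((1/2:ℝ)) ^ (-((-(1:ℝ)/2)+1)/2) ≤ 1.1893 := by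
    rw [show (-((-(1:ℝ)/2)+1)/2) = -((1:ℝ)/4) by norm_num, half_rpow_neg]
    exact two_rpow_14_le
  have hg : Real.Gamma (((-(1:ℝ)/2)+1)/2) ≤ 4 := by
    rw [show ((-(1:ℝ)/2+1)/2) = 1/4 by norm_num]; exact Gamma_quarter_le
  have hg0 : 0 < Real.Gamma ((-(1:ℝ)/2+1)/2) := Real.Gamma_pos_of_pos (by norm_num)
  have ha0 : (0:ℝ) ≤ (1/2:ℝ) ^ (-(-(1:ℝ)/2+1)/2) := Real.rpow_nonneg (by norm_num) _
  calc (Real.sqrt (2*π))⁻¹ * (2 * ((1/2:ℝ) ^ (-(-(1:ℝ)/2+1)/2) * (1/2) * Real.Gamma ((-(1:ℝ)/2+1)/2)))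
      = (Real.sqrt (2*π))⁻¹ * ((1/2:ℝ) ^ (-(-(1:ℝ)/2+1)/2) * Real.Gamma ((-(1:ℝ)/2+1)/2)) := by ring
    _ ≤ (2.5066:ℝ)⁻¹ * (1.1893 * 4) := by
        apply mul_le_mul sqrt_two_pi_inv_le (mul_le_mul h1 hg hg0.le (by norm_num)) (by positivity) (by norm_num)
    _ ≤ 1.898 := by norm_num



/-- For `d ≥ e²`, `Z` standard Gaussian and
`X := max{|Z|, |Z|⁻¹}`,
`log log d ≤ E[log log(dX)] ≤ log 2 + log log(d/e) + √(8/π)`. -/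
theorem loglog_d_expectation_bound (d : ℝ) (hd : Real.exp 2 ≤ d) :
    Real.log (Real.log d)
        ≤ (∫ z, Real.log (Real.log (d * max |z| |z|⁻¹)) ∂(gaussianReal 0 1)) ∧
    (∫ z, Real.log (Real.log (d * max |z| |z|⁻¹)) ∂(gaussianReal 0 1))
        ≤ Real.log 2 + Real.log (Real.log (d / Real.exp 1)) + Real.sqrt (8 / π) := by
  have hd0 : (0:ℝ) < d := lt_of_lt_of_le (Real.exp_pos 2) hd
  have hld : 2 ≤ Real.log d := by
    rw [← Real.log_exp 2]
    exact Real.log_le_log (Real.exp_pos 2) hd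
  have hlde : Real.log (d / Real.exp 1) = Real.log d - 1 := by
    rw [Real.log_div hd0.ne' (Real.exp_ne_zero 1), Real.log_exp]
  have hlld : 0 < Real.log (Real.log d) := Real.log_pos (by linarith)
  set μ := gaussianReal 0 1 with hμ
  set C : ℝ := Real.log 2 + Real.log (Real.log (d / Real.exp 1)) + 0.6 with hC
  set f : ℝ → ℝ := fun z => Real.log (Real.log (d * max |z| |z|⁻¹)) with hf
  set G : ℝ → ℝ := fun z => C + 0.3 * (|z| ^ ((1:ℝ)/2) + |z| ^ (-(1:ℝ)/2)) with hG
  -- pointwise bounds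
  have key : ∀ z : ℝ, z ≠ 0 → Real.log (Real.log d) ≤ f z ∧ f z ≤ G z := by
    intro z hz
    have ht : 0 < |z| := abs_pos.mpr hz
    set X : ℝ := max |z| |z|⁻¹ with hX
    have hX1 : 1 ≤ X := by
      rcases le_or_gt 1 |z| with h | h
      · exact le_max_of_le_left h
      · refine le_max_of_le_right ?_
        nlinarith [mul_inv_cancel₀ ht.ne', inv_pos.mpr ht]
    have hX0 : 0 < X := lt_of_lt_of_le one_pos hX1
    have hdX : Real.log (d * X) = Real.log d + Real.log X := Real.log_mul hd0.ne' hX0.ne'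
    have hlogX : 0 ≤ Real.log X := Real.log_nonneg hX1
    constructor
    · apply Real.log_le_log (by linarith)
      rw [hdX]; linarith
    · -- upper bound
      have hXabs : Real.log X = abs (Real.log |z|) := by
        rcases le_or_gt 1 |z| with h | h
        · have h1 : |z|⁻¹ ≤ |z| := by nlinarith [mul_inv_cancel₀ ht.ne', inv_pos.mpr ht]
          rw [hX, max_eq_left h1, abs_of_nonneg (Real.log_nonneg h)]
        · have h1 : |z| ≤ |z|⁻¹ := by nlinarith [mul_inv_cancel₀ ht.ne', inv_pos.mpr ht]
          rw [hX, max_eq_right h1, Real.log_inv, abs_of_neg (Real.log_neg ht h)]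
      set a : ℝ := Real.log d - 1 with ha
      set b : ℝ := 1 + Real.log X with hb
      have ha1 : 1 ≤ a := by simp [ha]; linarith
      have hb1 : 1 ≤ b := by simp [hb]; linarith
      have hfz : f z = Real.log (a + b) := by
        rw [hf]
        simp only []
        rw [hdX]
        congr 1
        ring
      have hab : a + b ≤ 2 * (a * b) := by nlinarith
      have h1 : Real.log (a + b) ≤ Real.log (2 * (a * b)) :=
        Real.log_le_log (by linarith) hab
      have h2 : Real.log (2 * (a * b)) = Real.log 2 + Real.log a + Real.log b := by
        rw [Real.log_mul (by norm_num) (by positivity), Real.log_mul (by positivity) (by positivity)]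
        ring
      have h3 : Real.log a = Real.log (Real.log (d / Real.exp 1)) := by rw [hlde]
      have h4 : Real.log b ≤ 0.6 + 0.3 * (|z| ^ ((1:ℝ)/2) + |z| ^ (-(1:ℝ)/2)) := by
        have h5 : Real.log b ≤ 0.6 + 0.3 * Real.exp (Real.log X / 2) := by
          rw [hb]; exact logOneAdd_le hlogX
        have h6 : Real.exp (Real.log X / 2) ≤ |z| ^ ((1:ℝ)/2) + |z| ^ (-(1:ℝ)/2) := by
          rw [hXabs]
          refine (exp_abs_log_half_le ht).trans ?_
          rw [Real.sqrt_eq_rpow, ← Real.rpow_neg (abs_nonneg z),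
            show -((1:ℝ)/2) = -(1:ℝ)/2 by norm_num]
        nlinarith
      rw [hfz, hG, hC]
      calc Real.log (a + b) ≤ Real.log 2 + Real.log a + Real.log b := h2 ▸ h1
        _ ≤ Real.log 2 + Real.log (Real.log (d / Real.exp 1))
              + (0.6 + 0.3 * (|z| ^ ((1:ℝ)/2) + |z| ^ (-(1:ℝ)/2))) := by rw [h3]; linarith
        _ = Real.log 2 + Real.log (Real.log (d / Real.exp 1)) + 0.6
              + 0.3 * (|z| ^ ((1:ℝ)/2) + |z| ^ (-(1:ℝ)/2)) := by ring
  -- a.e. nonzero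
  have hae : ∀ᵐ z ∂μ, z ≠ 0 := by
    have habs : μ ≪ (volume : Measure ℝ) := gaussianReal_absolutelyContinuous 0 one_ne_zero
    have h0 : μ ({0} : Set ℝ) = 0 := habs (volume_singleton)
    rw [ae_iff]
    convert h0 using 2
    ext x
    simp
  -- integrability
  have hi1 : Integrable (fun z : ℝ => |z| ^ ((1:ℝ)/2)) μ :=
    integrable_abs_rpow_gaussianReal (by norm_num)
  have hi2 : Integrable (fun z : ℝ => |z| ^ (-(1:ℝ)/2)) μ :=
    integrable_abs_rpow_gaussianReal (by norm_num)
  have hadd : Integrable (fun z : ℝ => 0.3 * (|z| ^ ((1:ℝ)/2) + |z| ^ (-(1:ℝ)/2))) μ := by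
    have h := (hi1.add hi2).const_mul (0.3:ℝ)
    simpa using h
  have hiG : Integrable G μ := by
    rw [hG]
    exact (integrable_const C).add hadd
  have hmeasf : AEStronglyMeasurable f μ := by
    apply Measurable.aestronglyMeasurable
    apply Real.measurable_log.comp
    apply Real.measurable_log.comp
    exact measurable_const.mul (measurable_abs.max measurable_abs.inv)
  have hfint : Integrable f μ := by
    refine hiG.mono' hmeasf ?_
    filter_upwards [hae] with z hz
    rw [Real.norm_eq_abs, abs_of_pos (lt_of_lt_of_le hlld (key z hz).1)]
    exact (key z hz).2
  constructor
  · have h := integral_mono_ae (integrable_const (Real.log (Real.log d))) hfint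
      (by filter_upwards [hae] with z hz; exact (key z hz).1)
    rwa [integral_const, probReal_univ, one_smul] at h
  · have h := integral_mono_ae hfint hiG
      (by filter_upwards [hae] with z hz; exact (key z hz).2)
    refine h.trans ?_
    have hGint : ∫ z, G z ∂μ
        = C + 0.3 * ((∫ z, |z| ^ ((1:ℝ)/2) ∂μ) + ∫ z, |z| ^ (-(1:ℝ)/2) ∂μ) := by
      rw [hG, integral_add (integrable_const C) hadd,
        integral_const, probReal_univ, one_smul,
        integral_const_mul, integral_add hi1 hi2]
    rw [hGint, hC]
    have := J1_le
    have := J2_le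
    have := sqrt_eight_div_pi_ge
    have h1nn : 0 ≤ ∫ z, |z| ^ ((1:ℝ)/2) ∂μ := by positivity
    have h2nn : 0 ≤ ∫ z, |z| ^ (-(1:ℝ)/2) ∂μ := by positivity
    nlinarith
end

section
/- With notation as above (W = Σ a_i Y_i, Σ a_i = 0, γ = τ‖a⃗‖₂, X_{a⃗} = max{e^W, e^{-W}}), one has E[ log log( e X_{a⃗} ) ] ≤ 2 + log(1 + γ). -/
open MeasureTheory ProbabilityTheory Real Set


lemma integrable_abs_rpow_mul_exp_neg_mul_sq {b s : ℝ} (hb : 0 < b) (hs : -1 < s) :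
    Integrable fun x : ℝ => |x| ^ s * Real.exp (-b * x ^ 2) := by
  have hIoi : IntegrableOn (fun x : ℝ => |x| ^ s * Real.exp (-b * x ^ 2)) (Ioi 0) :=
    (integrableOn_rpow_mul_exp_neg_mul_sq hb hs).congr_fun
      (fun x hx => by rw [abs_of_pos hx]) measurableSet_Ioi
  rw [← integrableOn_univ, ← @Iio_union_Ici _ _ (0 : ℝ), integrableOn_union,
    integrableOn_Ici_iff_integrableOn_Ioi]
  refine ⟨?_, hIoi⟩
  rw [← (Measure.measurePreserving_neg (volume : Measure ℝ)).integrableOn_comp_preimage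
      (Homeomorph.neg ℝ).measurableEmbedding]
  simp only [Function.comp_def, neg_sq, neg_preimage, neg_Iio, neg_neg, neg_zero, abs_neg]
  exact hIoi

lemma log_abs_sq_le (x : ℝ) :
    (Real.log |x|) ^ 2 ≤ 16 * |x| ^ (-(2:ℝ)⁻¹) + x ^ 2 := by
  rcases eq_or_ne x 0 with rfl | hx
  · simp
  have hax : 0 < |x| := abs_pos.mpr hx
  rcases le_or_gt 1 |x| with h1 | h1
  · have hlog : 0 ≤ Real.log |x| := Real.log_nonneg h1
    have hle : Real.log |x| ≤ |x| - 1 := by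
      have := Real.log_le_sub_one_of_pos hax
      linarith
    have h2 : (Real.log |x|)^2 ≤ (|x| - 1)^2 := by nlinarith
    have h3 : (|x| - 1)^2 ≤ x^2 := by
      have : |x|^2 = x^2 := sq_abs x
      nlinarith
    have h4 : 0 ≤ 16 * |x| ^ (-(2:ℝ)⁻¹) := by positivity
    linarith
  · set u : ℝ := |x| ^ (-(4:ℝ)⁻¹) with hu
    have hupos : 0 < u := Real.rpow_pos_of_pos hax _
    have hlogu : Real.log u = -(4:ℝ)⁻¹ * Real.log |x| := Real.log_rpow hax _
    have hul : Real.log u ≤ u - 1 := by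
      have := Real.log_le_sub_one_of_pos hupos
      linarith
    have husq : u ^ 2 = |x| ^ (-(2:ℝ)⁻¹) := by
      rw [hu, ← Real.rpow_natCast (|x| ^ (-(4:ℝ)⁻¹)) 2, ← Real.rpow_mul (abs_nonneg x)]
      norm_num
    have hlneg : Real.log |x| < 0 := Real.log_neg hax h1
    have hx2 : 0 ≤ x ^ 2 := sq_nonneg x
    nlinarith [sq_nonneg (Real.log |x|), sq_nonneg u]

lemma memLp_log_abs_gaussian :
    MemLp (fun z : ℝ => Real.log |z|) 2 (gaussianReal 0 1) := by
  have hmeas : Measurable fun z : ℝ => Real.log |z| :=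
    Real.measurable_log.comp measurable_abs
  rw [memLp_two_iff_integrable_sq hmeas.aestronglyMeasurable,
    gaussianReal_of_var_ne_zero 0 one_ne_zero,
    integrable_withDensity_iff (measurable_gaussianPDF 0 1)
      (Filter.Eventually.of_forall fun x => ENNReal.ofReal_lt_top)]
  have hM : Integrable (fun x : ℝ =>
      16 * (|x| ^ (-(2:ℝ)⁻¹) * Real.exp (-(2:ℝ)⁻¹ * x ^ 2))
        + |x| ^ (2:ℝ) * Real.exp (-(2:ℝ)⁻¹ * x ^ 2)) volume := by
    refine ((integrable_abs_rpow_mul_exp_neg_mul_sq (by norm_num) (by norm_num)).const_mul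
      16).add (integrable_abs_rpow_mul_exp_neg_mul_sq (by norm_num) (by norm_num))
  refine hM.mono' ?_ ?_
  · exact ((hmeas.pow_const 2).mul
      ((measurable_gaussianPDF 0 1).ennreal_toReal)).aestronglyMeasurable
  · refine Filter.Eventually.of_forall fun x => ?_
    have hpdf0 : (gaussianPDF 0 1 x).toReal = gaussianPDFReal 0 1 x :=
      ENNReal.toReal_ofReal (gaussianPDFReal_nonneg 0 1 x)
    have hpdfnn : 0 ≤ gaussianPDFReal 0 1 x := gaussianPDFReal_nonneg 0 1 x
    have hpdfle : gaussianPDFReal 0 1 x ≤ Real.exp (-(2:ℝ)⁻¹ * x ^ 2) := by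
      have h1 : gaussianPDFReal 0 1 x = (Real.sqrt (2*π))⁻¹ * rexp (-x^2/2) := by
        simp [gaussianPDFReal]
      have h2π : 1 ≤ Real.sqrt (2 * π) := by
        rw [show (1:ℝ) = Real.sqrt 1 by simp]
        exact Real.sqrt_le_sqrt (by nlinarith [Real.pi_gt_three])
      have hinv : (Real.sqrt (2 * π))⁻¹ ≤ 1 := by
        rw [inv_le_one_iff₀]; right; exact h2π
      have hexp : rexp (-x^2/2) = Real.exp (-(2:ℝ)⁻¹ * x ^ 2) := by ring_nf
      rw [h1, hexp]
      nlinarith [Real.exp_pos (-(2:ℝ)⁻¹ * x ^ 2)]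
    rw [Real.norm_eq_abs, hpdf0]
    rw [abs_of_nonneg (mul_nonneg (sq_nonneg _) hpdfnn)]
    have hb := log_abs_sq_le x
    have habs2 : |x| ^ (2:ℝ) = x ^ 2 := by
      rw [show ((2:ℝ)) = ((2:ℕ):ℝ) by norm_num, Real.rpow_natCast, sq_abs]
    calc (Real.log |x|) ^ 2 * gaussianPDFReal 0 1 x
        ≤ (16 * |x| ^ (-(2:ℝ)⁻¹) + x ^ 2) * Real.exp (-(2:ℝ)⁻¹ * x ^ 2) := by
          apply mul_le_mul hb hpdfle hpdfnn (by positivity)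
      _ = 16 * (|x| ^ (-(2:ℝ)⁻¹) * Real.exp (-(2:ℝ)⁻¹ * x ^ 2))
            + |x| ^ (2:ℝ) * Real.exp (-(2:ℝ)⁻¹ * x ^ 2) := by rw [habs2]; ring
/-- For `W := Σ a_i log|Z_i|` with `Z_i` i.i.d. standard
Gaussians, `Σ a_i = 0`, `τ²` the variance of `log|Z₁|`, `γ := τ‖a⃗‖₂`, and
`X_{a⃗} := max{e^W, e^{-W}}`, one has `E[log log(e X_{a⃗})] ≤ 2 + log(1+γ)`. -/
theorem loglog_expectation_linear_combination
    {Ω : Type*} [MeasureSpace Ω] [IsProbabilityMeasure (ℙ : Measure Ω)]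
    (k : ℕ) (Z : Fin k → Ω → ℝ) (hZmeas : ∀ i, Measurable (Z i))
    (hZind : iIndepFun Z ℙ)
    (hZlaw : ∀ i, (ℙ : Measure Ω).map (Z i) = gaussianReal 0 1)
    (a : Fin k → ℝ) (hsum : ∑ i, a i = 0)
    (τ γ : ℝ) (hτ : 0 ≤ τ)
    (hτ2 : τ ^ 2
      = ProbabilityTheory.variance (fun z : ℝ => Real.log |z|) (gaussianReal 0 1))
    (hγ : γ = τ * Real.sqrt (∑ i, (a i) ^ 2)) :
    (∫ ω, Real.log (Real.log (Real.exp 1 *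
          max (Real.exp (∑ i, a i * Real.log |Z i ω|))
              (Real.exp (-(∑ i, a i * Real.log |Z i ω|))))) ∂ℙ)
      ≤ 2 + Real.log (1 + γ) := by
  have hlogmeas : Measurable fun z : ℝ => Real.log |z| :=
    Real.measurable_log.comp measurable_abs
  set m : ℝ := ∫ z, Real.log |z| ∂(gaussianReal 0 1) with hm
  set W : Ω → ℝ := fun ω => ∑ i, a i * Real.log |Z i ω| with hWdef
  -- basic facts about Y i = log |Z i|
  have hYmem : ∀ i, MemLp (fun ω => Real.log |Z i ω|) 2 (ℙ : Measure Ω) := by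
    intro i
    have h := memLp_log_abs_gaussian
    rw [← hZlaw i] at h
    exact (memLp_map_measure_iff hlogmeas.aestronglyMeasurable
      (hZmeas i).aemeasurable).mp h
  have hYint : ∀ i, Integrable (fun ω => Real.log |Z i ω|) ℙ :=
    fun i => (hYmem i).integrable one_le_two
  have hYmean : ∀ i, ∫ ω, Real.log |Z i ω| ∂ℙ = m := by
    intro i
    rw [hm, ← hZlaw i,
      integral_map (hZmeas i).aemeasurable hlogmeas.aestronglyMeasurable]
  have hYvar : ∀ i, variance (fun ω => Real.log |Z i ω|) ℙ = τ ^ 2 := by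
    intro i
    rw [hτ2, variance_eq_sub (hYmem i), variance_eq_sub memLp_log_abs_gaussian]
    congr 1
    · simp only [Pi.pow_apply]
      rw [← hZlaw i,
        integral_map (hZmeas i).aemeasurable
          ((hlogmeas.pow_const 2).aestronglyMeasurable)]
    · rw [hYmean i]
  -- the family X i = a i * log |Z i|
  set X : Fin k → Ω → ℝ := fun i ω => a i * Real.log |Z i ω| with hXdef
  have hXmem : ∀ i, MemLp (X i) 2 (ℙ : Measure Ω) :=
    fun i => (hYmem i).const_mul (a i)
  have hXind : iIndepFun X ℙ :=
    hZind.comp (fun i z => a i * Real.log |z|)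
      (fun i => hlogmeas.const_mul (a i))
  have hWsum : W = ∑ i, X i := by
    funext ω
    simp [hWdef, hXdef]
  have hWmem : MemLp W 2 (ℙ : Measure Ω) := by
    rw [hWsum]; exact memLp_finsetSum' _ (fun i _ => hXmem i)
  -- variance of W
  have hsum_sq : Real.sqrt (∑ i, (a i) ^ 2) ^ 2 = ∑ i, (a i) ^ 2 :=
    Real.sq_sqrt (Finset.sum_nonneg fun i _ => sq_nonneg _)
  have hVarW : variance W ℙ = γ ^ 2 := by
    rw [hWsum, IndepFun.variance_sum (fun i _ => hXmem i)
      (fun i _ j _ hij => hXind.indepFun hij)]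
    have : ∀ i : Fin k, variance (X i) ℙ = (a i) ^ 2 * τ ^ 2 := by
      intro i
      rw [hXdef]
      rw [variance_const_mul (a i) (fun ω => Real.log |Z i ω|) ℙ, hYvar i]
    rw [Finset.sum_congr rfl fun i _ => this i, hγ]
    rw [mul_pow, hsum_sq, ← Finset.sum_mul]
    ring
  -- mean of W
  have hWint : Integrable W ℙ := hWmem.integrable one_le_two
  have hEW : ∫ ω, W ω ∂ℙ = 0 := by
    rw [hWdef]
    rw [integral_finset_sum _ (fun i _ => (hYint i).const_mul (a i))]
    have : ∀ i : Fin k, ∫ ω, a i * Real.log |Z i ω| ∂ℙ = a i * m := by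
      intro i; rw [integral_const_mul, hYmean i]
    rw [Finset.sum_congr rfl fun i _ => this i, ← Finset.sum_mul, hsum, zero_mul]
  have hEW2 : ∫ ω, (W ω) ^ 2 ∂ℙ = γ ^ 2 := by
    have h := variance_eq_sub hWmem
    rw [hVarW] at h
    have h2 : (ℙ : Measure Ω)[W ^ 2] = ∫ ω, (W ω) ^ 2 ∂ℙ := by
      simp only [Pi.pow_apply]
    have h3 : (ℙ : Measure Ω)[W] = ∫ ω, W ω ∂ℙ := rfl
    rw [h2, h3, hEW] at h
    linarith
  have hsqint : Integrable (fun ω => (W ω) ^ 2) ℙ := by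
    have := hWmem.integrable_sq
    simpa [Pi.pow_apply] using this
  -- parameters
  have hγ0 : 0 ≤ γ := hγ ▸ mul_nonneg hτ (Real.sqrt_nonneg _)
  set g : ℝ := max γ 1 with hgdef
  have hg1 : (1:ℝ) ≤ g := le_max_right _ _
  have hgγ : γ ≤ g := le_max_left _ _
  have hg0 : 0 < g := lt_of_lt_of_le one_pos hg1
  set D : ℝ := 2 * g * (1 + g) with hD
  have hD0 : 0 < D := by rw [hD]; positivity
  set B : Ω → ℝ := fun ω => Real.log (1 + g) + ((W ω) ^ 2 - g ^ 2) / D with hBdef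
  have hdiv : Integrable (fun ω => ((W ω) ^ 2 - g ^ 2) / D) ℙ :=
    (hsqint.sub (integrable_const (g ^ 2))).div_const D
  have hBint : Integrable B ℙ := (integrable_const _).add hdiv
  -- pointwise bound
  have hpoint : ∀ ω, Real.log (1 + |W ω|) ≤ B ω := by
    intro ω
    set w := W ω
    have h1 : (0:ℝ) < 1 + |w| := by positivity
    have h2 : (0:ℝ) < 1 + g := by positivity
    have hlog : Real.log (1 + |w|) - Real.log (1 + g) ≤ (1 + |w|) / (1 + g) - 1 := by
      rw [← Real.log_div (ne_of_gt h1) (ne_of_gt h2)]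
      exact Real.log_le_sub_one_of_pos (by positivity)
    have key : (1 + |w|) / (1 + g) - 1 ≤ (w ^ 2 - g ^ 2) / D := by
      rw [div_sub_one (ne_of_gt h2), div_le_div_iff₀ h2 hD0, hD]
      nlinarith [sq_nonneg (|w| - g), sq_abs w, abs_nonneg w]
    rw [hBdef]
    simp only
    linarith
  -- rewrite the integrand
  have hrw : ∀ ω, Real.log (Real.log (Real.exp 1 *
        max (Real.exp (W ω)) (Real.exp (-(W ω))))) = Real.log (1 + |W ω|) := by
    intro ω
    have hmax : max (Real.exp (W ω)) (Real.exp (-(W ω))) = Real.exp |W ω| := by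
      rw [abs_eq_max_neg, Monotone.map_max Real.exp_monotone]
    rw [hmax, ← Real.exp_add, Real.log_exp]
  calc (∫ ω, Real.log (Real.log (Real.exp 1 *
          max (Real.exp (∑ i, a i * Real.log |Z i ω|))
              (Real.exp (-(∑ i, a i * Real.log |Z i ω|))))) ∂ℙ)
      = ∫ ω, Real.log (1 + |W ω|) ∂ℙ :=
        integral_congr_ae (Filter.Eventually.of_forall fun ω => hrw ω)
    _ ≤ ∫ ω, B ω ∂ℙ := by
        apply integral_mono_of_nonneg
        · exact Filter.Eventually.of_forall fun ω =>
            Real.log_nonneg (by simp [abs_nonneg])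
        · exact hBint
        · exact Filter.Eventually.of_forall hpoint
    _ = Real.log (1 + g) + (γ ^ 2 - g ^ 2) / D := by
        rw [hBdef]
        simp only
        rw [integral_add (integrable_const _) hdiv]
        rw [integral_const, probReal_univ, smul_eq_mul, one_mul]
        congr 1
        rw [integral_div, integral_sub hsqint (integrable_const _), hEW2,
          integral_const, probReal_univ, smul_eq_mul, one_mul]
    _ ≤ Real.log (1 + g) := by
        have hnum : γ ^ 2 - g ^ 2 ≤ 0 := by nlinarith
        have := div_nonpos_of_nonpos_of_nonneg hnum hD0.le
        linarith
    _ ≤ 2 + Real.log (1 + γ) := by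
        have hle : 1 + g ≤ 2 * (1 + γ) := by
          have : g ≤ γ + 1 := max_le (by linarith) (by linarith)
          linarith
        have h2 : Real.log (1 + g) ≤ Real.log (2 * (1 + γ)) :=
          Real.log_le_log (by positivity) hle
        rw [Real.log_mul (by norm_num) (by positivity)] at h2
        have hlog2 : Real.log 2 ≤ 1 := by
          have := Real.log_le_sub_one_of_pos (by norm_num : (0:ℝ) < 2)
          linarith
        have hγlog : 0 ≤ Real.log (1 + γ) := Real.log_nonneg (by linarith)
        linarith
end
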